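/- arXiv:1701.06191 — 7 statements merged into one kernel-verified Lean document; each statement's English description precedes it below -/
import Mathlib

section
/- Let a ≥ 0 and 0 ≤ γ < 1/(1/3 + a/2). Then a·√(ψ(γ)/2) < 1, where ψ(γ) = γe^γ - e^γ + 1. -/
open Real

lemma psi_bound (x : ℝ) (hx0 : 0 ≤ x) (hx3 : x < 3) :
    x * Real.exp x - Real.exp x + 1 ≤ x ^ 2 / (2 * (1 - x / 3) ^ 2) := by
  set g : ℝ → ℝ := fun t => t ^ 2 / (2 * (1 - t / 3) ^ 2) - (t * Real.exp t - Real.exp t + 1)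
    with hg
  have hmono : MonotoneOn g (Set.Ico (0:ℝ) 3) := by
    have hderiv : ∀ t ∈ Set.Ioo (0:ℝ) 3,
        HasDerivAt g (t / (1 - t / 3) ^ 3 - t * Real.exp t) t := by
      intro t ht
      have hne : (2 * (1 - t / 3) ^ 2) ≠ 0 := by
        have : (1 : ℝ) - t / 3 > 0 := by linarith [ht.2]
        positivity
      have h1 : HasDerivAt (fun t : ℝ => t ^ 2 / (2 * (1 - t / 3) ^ 2))
          ((2 * t * (2 * (1 - t / 3) ^ 2) - t ^ 2 * (2 * (2 * (1 - t / 3) * (-(1/3)))))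
            / (2 * (1 - t / 3) ^ 2) ^ 2) t := by
        have hnum : HasDerivAt (fun t : ℝ => t ^ 2) (2 * t) t := by
          simpa using (hasDerivAt_pow 2 t)
        have hin : HasDerivAt (fun t : ℝ => 1 - t / 3) (-(1/3)) t := by
          simpa using ((hasDerivAt_id t).div_const 3).const_sub 1
        have hden : HasDerivAt (fun t : ℝ => 2 * (1 - t / 3) ^ 2)
            (2 * (2 * (1 - t / 3) * (-(1/3)))) t := by
          simpa [mul_comm, mul_assoc] using (hin.pow 2).const_mul 2
        exact hnum.div hden hne
      have h2 : HasDerivAt (fun t : ℝ => t * Real.exp t - Real.exp t + 1)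
          (t * Real.exp t) t := by
        have := ((hasDerivAt_id t).mul (Real.hasDerivAt_exp t)).sub
          (Real.hasDerivAt_exp t) |>.add_const 1
        simpa [mul_comm] using this
      have hpos : (1 : ℝ) - t / 3 > 0 := by linarith [ht.2]
      have heq : (2 * t * (2 * (1 - t / 3) ^ 2) - t ^ 2 * (2 * (2 * (1 - t / 3) * (-(1/3)))))
          / (2 * (1 - t / 3) ^ 2) ^ 2 = t / (1 - t / 3) ^ 3 := by
        rw [div_eq_div_iff (by positivity) (by positivity)]; ring
      have := h1.sub h2
      rw [heq] at this
      exact this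
    have hcont : ContinuousOn g (Set.Ico (0:ℝ) 3) := by
      apply ContinuousOn.sub
      · apply ContinuousOn.div (by fun_prop) (by fun_prop)
        intro t ht
        have : (1 : ℝ) - t / 3 > 0 := by
          have := ht.2; simp at this ⊢; linarith
        positivity
      · fun_prop
    apply monotoneOn_of_deriv_nonneg (convex_Ico 0 3) hcont
    · intro t ht
      rw [interior_Ico] at ht
      exact (hderiv t ht).differentiableAt.differentiableWithinAt
    · intro t ht
      rw [interior_Ico] at ht
      rw [(hderiv t ht).deriv]
      have ht0 : 0 < t := ht.1
      have hpos : (0:ℝ) < 1 - t / 3 := by linarith [ht.2]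
      have hkey : Real.exp t * (1 - t / 3) ^ 3 ≤ 1 := by
        have h1 : (1 : ℝ) - t / 3 ≤ Real.exp (-(t / 3)) := by
          have := Real.add_one_le_exp (-(t/3)); linarith
        have h2 : (1 - t / 3) ^ 3 ≤ Real.exp (-(t / 3)) ^ 3 :=
          pow_le_pow_left₀ hpos.le h1 3
        have h3 : Real.exp (-(t / 3)) ^ 3 = Real.exp (-t) := by
          rw [← Real.exp_nat_mul]; ring_nf
        calc Real.exp t * (1 - t / 3) ^ 3 ≤ Real.exp t * Real.exp (-t) := by
              rw [← h3]; exact mul_le_mul_of_nonneg_left h2 (Real.exp_pos t).le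
          _ = 1 := by rw [← Real.exp_add]; simp
      have : t * Real.exp t ≤ t / (1 - t / 3) ^ 3 := by
        rw [le_div_iff₀ (by positivity)]
        calc t * Real.exp t * (1 - t / 3) ^ 3 = t * (Real.exp t * (1 - t / 3) ^ 3) := by ring
          _ ≤ t * 1 := mul_le_mul_of_nonneg_left hkey ht0.le
          _ = t := mul_one t
      linarith
  have h0 : g 0 = 0 := by simp [hg]
  have := hmono (Set.mem_Ico.mpr ⟨le_refl 0, by norm_num⟩) (Set.mem_Ico.mpr ⟨hx0, hx3⟩) hx0
  rw [h0] at this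
  simpa [hg] using this

theorem stmt_1 (a γ : ℝ) (ha : 0 ≤ a) (h0 : 0 ≤ γ) (h1 : γ < 1 / (1/3 + a/2)) :
    a * Real.sqrt ((γ * Real.exp γ - Real.exp γ + 1) / 2) < 1 := by
  have hden : (0:ℝ) < 1/3 + a/2 := by linarith
  have hγ1 : γ * (1/3 + a/2) < 1 := by
    rw [lt_div_iff₀ hden] at h1; linarith
  have hγ3 : γ < 3 := by nlinarith
  have hpos : (0:ℝ) < 1 - γ / 3 := by linarith
  have hψ := psi_bound γ h0 hγ3
  set q := γ / (2 * (1 - γ / 3)) with hq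
  have hq0 : 0 ≤ q := by positivity
  have hsqrt : Real.sqrt ((γ * Real.exp γ - Real.exp γ + 1) / 2) ≤ q := by
    have hle : (γ * Real.exp γ - Real.exp γ + 1) / 2 ≤ q ^ 2 := by
      rw [hq]; rw [div_pow]
      have : γ ^ 2 / (2 * (1 - γ / 3) ^ 2) / 2 ≤ γ ^ 2 / (2 * (1 - γ / 3)) ^ 2 := by
        rw [div_div]
        apply div_le_div_of_nonneg_left (by positivity) (by positivity)
        nlinarith
      linarith
    calc Real.sqrt ((γ * Real.exp γ - Real.exp γ + 1) / 2) ≤ Real.sqrt (q ^ 2) :=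
          Real.sqrt_le_sqrt hle
      _ = q := by rw [Real.sqrt_sq hq0]
  have hfin : a * q < 1 := by
    rw [hq, ← mul_div_assoc, div_lt_one (by positivity)]
    nlinarith
  calc a * Real.sqrt ((γ * Real.exp γ - Real.exp γ + 1) / 2) ≤ a * q :=
        mul_le_mul_of_nonneg_left hsqrt ha
    _ < 1 := hfin
end

section
/- Let a ≥ 0 and 0 < γ < 1/(1/3 + a/2). Then ψ(γ)/(γ²(1 - a√(ψ(γ)/2))²) ≤ 1/(2(1 - (1/3 + a/2)γ)²), where ψ(γ) = γe^γ - e^γ + 1. -/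
lemma cube_ineq (x : ℝ) (hx : 0 ≤ x) (h3 : x ≤ 3) :
    (3 - x) ^ 3 * Real.exp x ≤ 27 := by
  have h := Real.add_one_le_exp (-(x/3))
  have h1 : 0 ≤ 1 - x/3 := by linarith
  have h2 : (1 - x/3) ^ 3 ≤ (Real.exp (-(x/3))) ^ 3 := by
    apply pow_le_pow_left₀ h1 (by linarith)
  have h4 : (Real.exp (-(x/3))) ^ 3 = Real.exp (-x) := by
    rw [← Real.exp_nat_mul]; ring_nf
  have h5 : Real.exp (-x) * Real.exp x = 1 := by
    rw [← Real.exp_add]; simp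
  have hE : 0 < Real.exp x := Real.exp_pos x
  nlinarith [h2, h4, h5, hE, pow_nonneg h1 3]

lemma psi_le (γ : ℝ) (h0 : 0 < γ) (h3 : γ < 3) :
    γ * Real.exp γ - Real.exp γ + 1 ≤ 9 * γ ^ 2 / (2 * (3 - γ) ^ 2) := by
  set f : ℝ → ℝ := fun x => 9 * x ^ 2 / (2 * (3 - x) ^ 2) - (x * Real.exp x - Real.exp x + 1)
    with hf
  have hd : ∀ x : ℝ, x < 3 →
      HasDerivAt f (27 * x / (3 - x) ^ 3 - x * Real.exp x) x := by
    intro x hx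
    have hne : (3 - x) ≠ 0 := by intro h; nlinarith
    have hne2 : 2 * (3 - x) ^ 2 ≠ 0 := by positivity
    have hu : HasDerivAt (fun x : ℝ => 9 * x ^ 2) (9 * (2 * x ^ 1)) x :=
      (hasDerivAt_pow 2 x).const_mul 9
    have hv0 : HasDerivAt (fun x : ℝ => 3 - x) (-1) x := (hasDerivAt_id x).const_sub 3
    have hv : HasDerivAt (fun x : ℝ => 2 * (3 - x) ^ 2)
        (2 * ((2 : ℕ) * (3 - x) ^ 1 * (-1))) x := (hv0.pow 2).const_mul 2
    have hdiv := hu.div hv hne2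
    have he : HasDerivAt (fun x : ℝ => x * Real.exp x - Real.exp x + 1)
        (1 * Real.exp x + x * Real.exp x - Real.exp x) x := by
      have := ((hasDerivAt_id x).mul (Real.hasDerivAt_exp x)).sub (Real.hasDerivAt_exp x)
      simpa using this.add_const 1
    have := hdiv.sub he
    refine this.congr_deriv ?_
    field_simp
    ring
  have hmono : MonotoneOn f (Set.Icc 0 γ) := by
    apply monotoneOn_of_deriv_nonneg (convex_Icc 0 γ)
    · intro x hx
      have hx3 : x < 3 := lt_of_le_of_lt hx.2 h3
      exact (hd x hx3).differentiableAt.continuousAt.continuousWithinAt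
    · intro x hx
      rw [interior_Icc] at hx
      exact ((hd x (lt_trans hx.2 h3)).differentiableAt).differentiableWithinAt
    · intro x hx
      rw [interior_Icc] at hx
      have hx0 : 0 < x := hx.1
      have hx3 : x < 3 := lt_trans hx.2 h3
      rw [(hd x hx3).deriv]
      have hcube : (3 - x) ^ 3 * Real.exp x ≤ 27 := cube_ineq x (le_of_lt hx0) (le_of_lt hx3)
      have h3x : (0:ℝ) < 3 - x := by linarith
      have hpos : 0 < (3 - x) ^ 3 := by positivity
      rw [sub_nonneg, le_div_iff₀ hpos]
      nlinarith [mul_le_mul_of_nonneg_left hcube hx0.le]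
  have h0' : (0 : ℝ) ∈ Set.Icc (0:ℝ) γ := Set.mem_Icc.mpr ⟨le_refl 0, h0.le⟩
  have hγ' : γ ∈ Set.Icc (0:ℝ) γ := Set.mem_Icc.mpr ⟨h0.le, le_refl γ⟩
  have := hmono h0' hγ' h0.le
  have hf0 : f 0 = 0 := by simp [hf]
  rw [hf0] at this
  simp only [hf] at this
  linarith

theorem stmt_2 (a γ : ℝ) (ha : 0 ≤ a) (h0 : 0 < γ) (h1 : γ < 1 / (1/3 + a/2)) :
    (γ * Real.exp γ - Real.exp γ + 1) /
      (γ ^ 2 * (1 - a * Real.sqrt ((γ * Real.exp γ - Real.exp γ + 1) / 2)) ^ 2)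
      ≤ 1 / (2 * (1 - (1/3 + a/2) * γ) ^ 2) := by
  have hc : 0 < 1/3 + a/2 := by linarith
  have hγ3 : γ < 3 := by
    have : 1 / (1/3 + a/2) ≤ 3 := by rw [div_le_iff₀ hc]; linarith
    linarith
  have hcγ : (1/3 + a/2) * γ < 1 := by
    have := (lt_div_iff₀ hc).mp h1
    linarith
  set E := Real.exp γ with hE
  have hEpos : 0 < E := Real.exp_pos γ
  set ψ := γ * E - E + 1 with hψ
  have hψ0 : 0 ≤ ψ := by
    have h := Real.add_one_le_exp (-γ)
    have h5 : Real.exp (-γ) * E = 1 := by rw [← Real.exp_add]; simp [hE]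
    nlinarith [h, h5, hEpos]
  set s := Real.sqrt (ψ / 2) with hs
  have hs0 : 0 ≤ s := Real.sqrt_nonneg _
  have hψ2 : ψ = 2 * s ^ 2 := by
    rw [hs, Real.sq_sqrt (by linarith : (0:ℝ) ≤ ψ/2)]; ring
  have hne3 : (3 - γ) ≠ 0 := by intro h; nlinarith
  have hsb : s ≤ 3 * γ / (2 * (3 - γ)) := by
    have hkey := psi_le γ h0 hγ3
    have ht2 : ψ / 2 ≤ (3 * γ / (2 * (3 - γ))) ^ 2 := by
      have : (3 * γ / (2 * (3 - γ))) ^ 2 = 9 * γ ^ 2 / (2 * (3 - γ) ^ 2) / 2 := by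
        field_simp; ring
      rw [this]
      linarith
    have ht0 : 0 ≤ 3 * γ / (2 * (3 - γ)) := div_nonneg (by linarith) (by linarith)
    calc s ≤ Real.sqrt ((3 * γ / (2 * (3 - γ))) ^ 2) := Real.sqrt_le_sqrt ht2
      _ = 3 * γ / (2 * (3 - γ)) := Real.sqrt_sq ht0
  have key2 : 2 * s * (1 - γ/3) ≤ γ := by
    have h13 : 0 < 1 - γ/3 := by linarith
    have heq : 2 * (3 * γ / (2 * (3 - γ))) * (1 - γ/3) = γ := by
      field_simp
    nlinarith [hsb, h13]
  have has : a * s < 1 := by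
    have h6 : a * (3 * γ) < 2 * (3 - γ) := by nlinarith [hcγ]
    have hpos : 0 < 2 * (3 - γ) := by linarith
    have step := mul_le_mul_of_nonneg_left hsb ha
    have h7 : a * (3 * γ / (2 * (3 - γ))) = a * (3 * γ) / (2 * (3 - γ)) := by ring
    calc a * s ≤ a * (3 * γ / (2 * (3 - γ))) := step
      _ = a * (3 * γ) / (2 * (3 - γ)) := h7
      _ < 1 := by rw [div_lt_one hpos]; linarith
  have huv : 2 * s * (1 - (1/3 + a/2) * γ) ≤ γ * (1 - a * s) := by nlinarith [key2]
  have hu0 : 0 ≤ 2 * s * (1 - (1/3 + a/2) * γ) := by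
    apply mul_nonneg (by linarith) (by linarith)
  have hsq := mul_self_le_mul_self hu0 huv
  have hden1 : 0 < γ ^ 2 * (1 - a * s) ^ 2 := mul_pos (pow_pos h0 2) (pow_pos (by linarith) 2)
  have hden2 : 0 < 2 * (1 - (1/3 + a/2) * γ) ^ 2 := mul_pos two_pos (pow_pos (by linarith) 2)
  rw [div_le_div_iff₀ hden1 hden2]
  nlinarith [hsq, hψ2]
end

section
/- For natural numbers m < n, the ratio ((n choose m) - (n-m choose m))/(n choose m) equals m·Σ_{l=1}^{m} (1/(n-m+l))·Π_{k=1}^{l-1} (n-2m+k)/(n-m+k), and this is at most m²/(n-m). -/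
open Finset

lemma prod_Icc_cast (a b : ℕ) :
    ∏ k ∈ Finset.Icc 1 b, ((a : ℝ) + k) = ((a + b).factorial : ℝ) / (a.factorial : ℝ) := by
  induction b with
  | zero => simp [div_self (show (a.factorial : ℝ) ≠ 0 by positivity)]
  | succ b ih =>
      rw [Finset.prod_Icc_succ_top (by omega : 1 ≤ b + 1), ih]
      have h : ((a + (b+1)).factorial : ℝ) = ((a + b).factorial : ℝ) * ((a : ℝ) + (b+1)) := by
        have : (a + (b+1)).factorial = (a + b + 1) * (a + b).factorial := by
          rw [← Nat.factorial_succ]; ring_nf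
        rw [this]; push_cast; ring
      rw [h]
      have : (a.factorial : ℝ) ≠ 0 := by positivity
      field_simp
      push_cast
      ring

lemma telescope (c : ℕ → ℝ) (m : ℕ) :
    1 - ∏ k ∈ Finset.Icc 1 m, c k
      = ∑ l ∈ Finset.Icc 1 m, (∏ k ∈ Finset.Icc 1 (l - 1), c k) * (1 - c l) := by
  induction m with
  | zero => simp
  | succ m ih =>
      rw [Finset.sum_Icc_succ_top (by omega : 1 ≤ m + 1),
        Finset.prod_Icc_succ_top (by omega : 1 ≤ m + 1), ← ih]
      simp only [Nat.add_sub_cancel]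
      ring

theorem stmt_5 (n m : ℕ) (hm : 1 ≤ m) (hmn : m < n) :
    ((n.choose m : ℝ) - ((n - m).choose m : ℝ)) / (n.choose m : ℝ)
        = (m : ℝ) * ∑ l ∈ Finset.Icc 1 m,
            (1 / ((n : ℝ) - m + l)) *
              ∏ k ∈ Finset.Icc 1 (l - 1), (((n : ℝ) - 2 * m + k) / ((n : ℝ) - m + k)) ∧
      ((n.choose m : ℝ) - ((n - m).choose m : ℝ)) / (n.choose m : ℝ)
        ≤ (m : ℝ) ^ 2 / ((n : ℝ) - m) := by
  have hmn' : (m : ℝ) + 1 ≤ n := by exact_mod_cast hmn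
  have ha : (0 : ℝ) < n.choose m := by
    exact_mod_cast Nat.choose_pos hmn.le
  have hden : ∀ k : ℕ, 1 ≤ k → (0 : ℝ) < (n : ℝ) - m + k := by
    intro k hk
    have : (1 : ℝ) ≤ k := by exact_mod_cast hk
    linarith
  -- b/a as a product
  have hb : (((n - m).choose m : ℝ)) / (n.choose m : ℝ)
      = ∏ k ∈ Finset.Icc 1 m, (((n : ℝ) - 2 * m + k) / ((n : ℝ) - m + k)) := by
    rcases le_or_gt (2 * m) n with h2 | h2
    · -- n ≥ 2m
      rw [Finset.prod_div_distrib]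
      have hnum : ∏ k ∈ Finset.Icc 1 m, ((n : ℝ) - 2 * m + k)
          = ((n - m).factorial : ℝ) / ((n - 2 * m).factorial : ℝ) := by
        have := prod_Icc_cast (n - 2 * m) m
        have hcast : ((n - 2 * m : ℕ) : ℝ) = (n : ℝ) - 2 * m := by
          push_cast [Nat.cast_sub h2]; ring_nf
        have harg : n - 2 * m + m = n - m := by omega
        rw [harg] at this
        rw [← this]
        exact Finset.prod_congr rfl fun k _ => by rw [hcast]
      have hden' : ∏ k ∈ Finset.Icc 1 m, ((n : ℝ) - m + k)
          = (n.factorial : ℝ) / ((n - m).factorial : ℝ) := by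
        have := prod_Icc_cast (n - m) m
        have hcast : ((n - m : ℕ) : ℝ) = (n : ℝ) - m := by
          push_cast [Nat.cast_sub hmn.le]; ring_nf
        have harg : n - m + m = n := by omega
        rw [harg] at this
        rw [← this]
        exact Finset.prod_congr rfl fun k _ => by rw [hcast]
      rw [hnum, hden']
      have hc1 : ((n - m).choose m : ℝ)
          = ((n - m).factorial : ℝ) / ((m.factorial : ℝ) * ((n - m - m).factorial : ℝ)) := by
        exact_mod_cast Nat.cast_choose ℝ (by omega : m ≤ n - m)
      have hc2 : (n.choose m : ℝ)
          = (n.factorial : ℝ) / ((m.factorial : ℝ) * ((n - m).factorial : ℝ)) := by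
        exact_mod_cast Nat.cast_choose ℝ hmn.le
      have harg2 : n - m - m = n - 2 * m := by omega
      rw [hc1, hc2, harg2]
      have f1 : ((n - m).factorial : ℝ) ≠ 0 := by positivity
      have f2 : ((n - 2 * m).factorial : ℝ) ≠ 0 := by positivity
      have f3 : (n.factorial : ℝ) ≠ 0 := by positivity
      have f4 : (m.factorial : ℝ) ≠ 0 := by positivity
      field_simp
    · -- n < 2m : both sides zero
      have hz : (n - m).choose m = 0 := Nat.choose_eq_zero_of_lt (by omega)
      rw [hz]
      rw [Finset.prod_eq_zero (i := 2 * m - n)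
        (Finset.mem_Icc.mpr ⟨by omega, by omega⟩)]
      · simp
      · have : ((2 * m - n : ℕ) : ℝ) = 2 * m - n := by
          push_cast [Nat.cast_sub (by omega : n ≤ 2 * m)]; ring_nf
        rw [this]
        norm_num
  -- the identity
  have hid : ((n.choose m : ℝ) - ((n - m).choose m : ℝ)) / (n.choose m : ℝ)
      = (m : ℝ) * ∑ l ∈ Finset.Icc 1 m,
          (1 / ((n : ℝ) - m + l)) *
            ∏ k ∈ Finset.Icc 1 (l - 1), (((n : ℝ) - 2 * m + k) / ((n : ℝ) - m + k)) := by
    rw [sub_div, div_self ha.ne', hb,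
      telescope (fun k => ((n : ℝ) - 2 * m + k) / ((n : ℝ) - m + k)) m,
      Finset.mul_sum]
    refine Finset.sum_congr rfl fun l hl => ?_
    have hl1 : 1 ≤ l := (Finset.mem_Icc.mp hl).1
    have hdl := hden l hl1
    have h1c : 1 - ((n : ℝ) - 2 * m + l) / ((n : ℝ) - m + l) = (m : ℝ) / ((n : ℝ) - m + l) := by
      field_simp
      ring
    rw [h1c]
    ring
  refine ⟨hid, ?_⟩
  rcases le_or_gt ((n : ℝ) - m) ((m : ℝ) ^ 2) with h | h
  · -- trivial case : LHS ≤ 1 ≤ m²/(n-m)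
    have hb0 : (0 : ℝ) ≤ ((n - m).choose m : ℝ) := by positivity
    have h1 : ((n.choose m : ℝ) - ((n - m).choose m : ℝ)) / (n.choose m : ℝ) ≤ 1 := by
      rw [div_le_one ha]; linarith
    have hpos : (0 : ℝ) < (n : ℝ) - m := by linarith
    have : (1 : ℝ) ≤ (m : ℝ) ^ 2 / ((n : ℝ) - m) := by
      rw [le_div_iff₀ hpos]; linarith
    linarith
  · -- n - m > m² ≥ m, so n ≥ 2m and factors are in [0,1]
    have hm1 : (1 : ℝ) ≤ m := by exact_mod_cast hm
    have hmm : (m : ℝ) ≤ (m : ℝ) ^ 2 := by nlinarith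
    have h2m : (2 : ℝ) * m ≤ n := by nlinarith
    have hpos : (0 : ℝ) < (n : ℝ) - m := by nlinarith
    rw [hid]
    have hsum : ∑ l ∈ Finset.Icc 1 m,
        (1 / ((n : ℝ) - m + l)) *
          ∏ k ∈ Finset.Icc 1 (l - 1), (((n : ℝ) - 2 * m + k) / ((n : ℝ) - m + k))
        ≤ ∑ l ∈ Finset.Icc 1 m, 1 / ((n : ℝ) - m) := by
      refine Finset.sum_le_sum fun l hl => ?_
      have hl1 : 1 ≤ l := (Finset.mem_Icc.mp hl).1
      have hdl := hden l hl1
      have hprod01 : ∏ k ∈ Finset.Icc 1 (l - 1), (((n : ℝ) - 2 * m + k) / ((n : ℝ) - m + k)) ≤ 1 := by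
        refine Finset.prod_le_one (fun k hk => ?_) (fun k hk => ?_)
        · have hk1 : 1 ≤ k := (Finset.mem_Icc.mp hk).1
          have := hden k hk1
          have hnum : (0 : ℝ) ≤ (n : ℝ) - 2 * m + k := by
            have : (1 : ℝ) ≤ k := by exact_mod_cast hk1
            nlinarith
          positivity
        · have hk1 : 1 ≤ k := (Finset.mem_Icc.mp hk).1
          have hdk := hden k hk1
          rw [div_le_one hdk]
          linarith
      have hprod0 : (0 : ℝ) ≤ ∏ k ∈ Finset.Icc 1 (l - 1), (((n : ℝ) - 2 * m + k) / ((n : ℝ) - m + k)) := by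
        refine Finset.prod_nonneg fun k hk => ?_
        have hk1 : 1 ≤ k := (Finset.mem_Icc.mp hk).1
        have hdk := hden k hk1
        have hnum : (0 : ℝ) ≤ (n : ℝ) - 2 * m + k := by
          have : (1 : ℝ) ≤ k := by exact_mod_cast hk1
          nlinarith
        positivity
      have h1l : 1 / ((n : ℝ) - m + l) ≤ 1 / ((n : ℝ) - m) := by
        apply one_div_le_one_div_of_le hpos
        have : (0 : ℝ) ≤ l := by positivity
        linarith
      calc (1 / ((n : ℝ) - m + l)) * ∏ k ∈ Finset.Icc 1 (l - 1), (((n : ℝ) - 2 * m + k) / ((n : ℝ) - m + k))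
          ≤ (1 / ((n : ℝ) - m + l)) * 1 := by
            exact mul_le_mul_of_nonneg_left hprod01 (by positivity)
        _ = 1 / ((n : ℝ) - m + l) := by ring
        _ ≤ 1 / ((n : ℝ) - m) := h1l
    have hcard : ∑ l ∈ Finset.Icc 1 m, (1 : ℝ) / ((n : ℝ) - m) = (m : ℝ) / ((n : ℝ) - m) := by
      rw [Finset.sum_const, Nat.card_Icc]
      simp [nsmul_eq_mul]
      ring
    calc (m : ℝ) * ∑ l ∈ Finset.Icc 1 m,
          (1 / ((n : ℝ) - m + l)) *
            ∏ k ∈ Finset.Icc 1 (l - 1), (((n : ℝ) - 2 * m + k) / ((n : ℝ) - m + k))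
        ≤ (m : ℝ) * ((m : ℝ) / ((n : ℝ) - m)) := by
          refine mul_le_mul_of_nonneg_left ?_ (by positivity)
          rw [← hcard] at *
          exact hsum
      _ = (m : ℝ) ^ 2 / ((n : ℝ) - m) := by ring
end

section
/- Self-bounding lemma: let f be a nonnegative bounded measurable function on a product probability space Ω = Π_k Ω_k with product measure μ, and suppose D f ≤ a² f pointwise, where Df = Σ_k (f - inf_{y∈Ω_k} S_y^k f)² and S_y^k substitutes y into the k-th coordinate. If additionally the entropy bound S_f(β) ≤ (β²/2) E_{βf}[Df] holds for all β > 0, then for all β ∈ (0, 2/a²), ln E[e^{βf}] ≤ βE[f]/(1 - a²β/2). -/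
open MeasureTheory Filter Topology Set

private lemma int_bdd {X : Type*} [MeasurableSpace X] {m : Measure X} [IsFiniteMeasure m]
    {g : X → ℝ} (hg : Measurable g) (K : ℝ) (hK : ∀ x, ‖g x‖ ≤ K) : Integrable g m :=
  (integrable_const K).mono' hg.aestronglyMeasurable (Filter.Eventually.of_forall hK)

private lemma herbst_aux {X : Type*} [MeasurableSpace X] (m : Measure X)
    [IsProbabilityMeasure m]
    (f : X → ℝ) (hf : Measurable f) (hf0 : ∀ x, 0 ≤ f x) (C : ℝ) (hC0 : 0 ≤ C)
    (hb : ∀ x, f x ≤ C) (a β : ℝ) (ha : 0 < a ^ 2)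
    (hkey : ∀ γ : ℝ, 0 < γ →
      γ * ((∫ x, f x * Real.exp (γ * f x) ∂m) / ∫ x, Real.exp (γ * f x) ∂m)
        - Real.log (∫ x, Real.exp (γ * f x) ∂m)
        ≤ a ^ 2 * γ ^ 2 / 2 *
          ((∫ x, f x * Real.exp (γ * f x) ∂m) / ∫ x, Real.exp (γ * f x) ∂m))
    (hβ0 : 0 < β) (hβ2 : β < 2 / a ^ 2) :
    Real.log (∫ x, Real.exp (β * f x) ∂m)
      ≤ β * (∫ x, f x ∂m) / (1 - a ^ 2 * β / 2) := by
  set Z : ℝ → ℝ := fun γ => ∫ x, Real.exp (γ * f x) ∂m with hZdef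
  set I : ℝ → ℝ := fun γ => ∫ x, f x * Real.exp (γ * f x) ∂m with hIdef
  have hintZ : ∀ γ : ℝ, Integrable (fun x => Real.exp (γ * f x)) m := by
    intro γ
    refine int_bdd ((hf.const_mul γ).exp) (Real.exp (|γ| * C)) fun x => ?_
    rw [Real.norm_eq_abs, abs_of_pos (Real.exp_pos _)]
    exact Real.exp_le_exp.2 <| le_trans
      (mul_le_mul_of_nonneg_right (le_abs_self γ) (hf0 x))
      (mul_le_mul_of_nonneg_left (hb x) (abs_nonneg γ))
  have hintI : ∀ γ : ℝ, Integrable (fun x => f x * Real.exp (γ * f x)) m := by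
    intro γ
    refine int_bdd (hf.mul ((hf.const_mul γ).exp)) (C * Real.exp (|γ| * C)) fun x => ?_
    rw [Real.norm_eq_abs, abs_of_nonneg (mul_nonneg (hf0 x) (Real.exp_pos _).le)]
    refine mul_le_mul (hb x) (Real.exp_le_exp.2 <| le_trans
      (mul_le_mul_of_nonneg_right (le_abs_self γ) (hf0 x))
      (mul_le_mul_of_nonneg_left (hb x) (abs_nonneg γ))) (Real.exp_pos _).le hC0
  have hZpos : ∀ γ : ℝ, 0 < Z γ := fun γ => integral_exp_pos (hintZ γ)
  have hZd : ∀ γ : ℝ, HasDerivAt Z (I γ) γ := by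
    intro γ
    have h := hasDerivAt_integral_of_dominated_loc_of_deriv_le
      (F := fun γ x => Real.exp (γ * f x)) (F' := fun γ x => f x * Real.exp (γ * f x))
      (x₀ := γ) (bound := fun _ => C * Real.exp ((|γ| + 1) * C)) (μ := m)
      (Metric.ball_mem_nhds γ one_pos)
      (Filter.Eventually.of_forall fun γ' => ((hf.const_mul γ').exp).aestronglyMeasurable)
      (hintZ γ)
      ((hf.mul ((hf.const_mul γ).exp)).aestronglyMeasurable)
      (Filter.Eventually.of_forall fun x γ' hγ' => ?_)
      (integrable_const _)
      (Filter.Eventually.of_forall fun x γ' _ => ?_)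
    · exact h.2
    · -- bound
      have habs : |γ'| ≤ |γ| + 1 := by
        have h1 : |γ' - γ| < 1 := by
          have := Metric.mem_ball.1 hγ'
          rwa [Real.dist_eq] at this
        have := abs_sub_abs_le_abs_sub γ' γ
        linarith
      rw [Real.norm_eq_abs, abs_of_nonneg (mul_nonneg (hf0 x) (Real.exp_pos _).le)]
      refine mul_le_mul (hb x) (Real.exp_le_exp.2 ?_) (Real.exp_pos _).le hC0
      calc γ' * f x ≤ |γ'| * f x := mul_le_mul_of_nonneg_right (le_abs_self γ') (hf0 x)
        _ ≤ (|γ| + 1) * C :=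
          mul_le_mul habs (hb x) (hf0 x) (by positivity)
    · -- derivative
      simpa [mul_comm] using (((hasDerivAt_id γ').mul_const (f x)).exp)
  have hLd : ∀ γ : ℝ, HasDerivAt (fun γ => Real.log (Z γ)) (I γ / Z γ) γ :=
    fun γ => (hZd γ).log (hZpos γ).ne'
  set L : ℝ → ℝ := fun γ => Real.log (Z γ) with hLdef
  have hZ0 : Z 0 = 1 := by
    simp [hZdef, measure_univ]
  have hL0 : L 0 = 0 := by simp [hLdef, hZ0]
  have hI0 : I 0 = ∫ x, f x ∂m := by simp [hIdef]
  set ψ : ℝ → ℝ := fun γ => L γ / γ - a ^ 2 / 2 * L γ with hψdef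
  have hψd : ∀ γ : ℝ, γ ≠ 0 →
      HasDerivAt ψ ((I γ / Z γ * γ - L γ * 1) / γ ^ 2 - a ^ 2 / 2 * (I γ / Z γ)) γ := by
    intro γ hγ
    exact ((hLd γ).div (hasDerivAt_id γ) hγ).sub ((hLd γ).const_mul (a ^ 2 / 2))
  have hderiv_nonpos : ∀ γ : ℝ, 0 < γ →
      (I γ / Z γ * γ - L γ * 1) / γ ^ 2 - a ^ 2 / 2 * (I γ / Z γ) ≤ 0 := by
    intro γ hγ
    have h := hkey γ hγ
    rw [sub_nonpos, div_le_iff₀ (by positivity)]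
    nlinarith [h]
  -- limit of ψ at 0+
  have hslope : Tendsto (fun γ => L γ / γ) (𝓝[>] (0:ℝ)) (𝓝 (∫ x, f x ∂m)) := by
    have h := hasDerivAt_iff_tendsto_slope.1 (hLd 0)
    rw [hI0, hZ0, div_one] at h
    have h' : Tendsto (slope L 0) (𝓝[>] (0:ℝ)) (𝓝 (∫ x, f x ∂m)) :=
      h.mono_left (nhdsWithin_mono _ fun x hx => ne_of_gt hx)
    refine h'.congr' ?_
    filter_upwards [self_mem_nhdsWithin] with γ hγ
    rw [slope_def_field, hL0, sub_zero, sub_zero]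
  have hcontL : Tendsto (fun γ => a ^ 2 / 2 * L γ) (𝓝[>] (0:ℝ)) (𝓝 0) := by
    have h : Tendsto L (𝓝 (0:ℝ)) (𝓝 (L 0)) := (hLd 0).continuousAt.tendsto
    rw [hL0] at h
    have h2 : Tendsto L (𝓝[>] (0:ℝ)) (𝓝 0) := h.mono_left nhdsWithin_le_nhds
    simpa using h2.const_mul (a ^ 2 / 2)
  have hψlim : Tendsto ψ (𝓝[>] (0:ℝ)) (𝓝 (∫ x, f x ∂m)) := by
    have := hslope.sub hcontL
    simpa using this
  have hmain : ψ β ≤ ∫ x, f x ∂m := by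
    refine ge_of_tendsto hψlim ?_
    filter_upwards [Ioo_mem_nhdsGT_of_mem (Set.left_mem_Ico.2 hβ0)] with γ hγ
    -- ψ β ≤ ψ γ via AntitoneOn on [γ, β]
    have hanti : AntitoneOn ψ (Set.Icc γ β) := by
      have hsub : ∀ x ∈ Set.Icc γ β, (0:ℝ) < x := fun x hx => lt_of_lt_of_le hγ.1 hx.1
      refine antitoneOn_of_deriv_nonpos (convex_Icc γ β) ?_ ?_ ?_
      · exact fun x hx => ((hψd x (hsub x hx).ne').continuousAt).continuousWithinAt
      · intro x hx
        rw [interior_Icc] at hx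
        exact ((hψd x (lt_trans hγ.1 hx.1).ne').differentiableAt).differentiableWithinAt
      · intro x hx
        rw [interior_Icc] at hx
        have hx0 : 0 < x := lt_trans hγ.1 hx.1
        rw [(hψd x hx0.ne').deriv]
        exact hderiv_nonpos x hx0
    exact hanti ⟨le_rfl, hγ.2.le⟩ ⟨hγ.2.le, le_rfl⟩ hγ.2.le
  have hψβ : L β / β - a ^ 2 / 2 * L β ≤ ∫ x, f x ∂m := hmain
  have hd : 0 < 1 - a ^ 2 * β / 2 := by
    have := (lt_div_iff₀ ha).1 hβ2
    nlinarith
  show L β ≤ β * (∫ x, f x ∂m) / (1 - a ^ 2 * β / 2)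
  rw [le_div_iff₀ hd]
  have h2 := mul_le_mul_of_nonneg_right hψβ hβ0.le
  rw [sub_mul, div_mul_cancel₀ _ hβ0.ne'] at h2
  nlinarith [h2]

theorem stmt_13 {n : ℕ} {Ω : Fin n → Type*} [∀ k, MeasurableSpace (Ω k)]
    [∀ k, Nonempty (Ω k)]
    (μ : ∀ k, Measure (Ω k)) [∀ k, IsProbabilityMeasure (μ k)]
    (f : (∀ k, Ω k) → ℝ) (hf : Measurable f) (hf0 : ∀ x, 0 ≤ f x)
    (C : ℝ) (hb : ∀ x, f x ≤ C) (a : ℝ)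
    (hDf : ∀ x, (∑ k, (f x - ⨅ y : Ω k, f (Function.update x k y)) ^ 2) ≤ a ^ 2 * f x)
    (hent : ∀ β : ℝ, 0 < β →
      β * ((∫ x, f x * Real.exp (β * f x) ∂(Measure.pi μ))
            / ∫ x, Real.exp (β * f x) ∂(Measure.pi μ))
          - Real.log (∫ x, Real.exp (β * f x) ∂(Measure.pi μ))
        ≤ β ^ 2 / 2 *
          ((∫ x, (∑ k, (f x - ⨅ y : Ω k, f (Function.update x k y)) ^ 2)
              * Real.exp (β * f x) ∂(Measure.pi μ))
            / ∫ x, Real.exp (β * f x) ∂(Measure.pi μ)))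
    (β : ℝ) (hβ0 : 0 < β) (hβ2 : β < 2 / a ^ 2) :
    Real.log (∫ x, Real.exp (β * f x) ∂(Measure.pi μ))
      ≤ β * (∫ x, f x ∂(Measure.pi μ)) / (1 - a ^ 2 * β / 2) := by
  rcases eq_or_ne a 0 with rfl | ha
  · exfalso
    norm_num at hβ2
    linarith
  have ha2 : 0 < a ^ 2 := by positivity
  have x0 : (∀ k, Ω k) := Classical.arbitrary _
  have hC0 : 0 ≤ C := le_trans (hf0 x0) (hb x0)
  refine herbst_aux (Measure.pi μ) f hf hf0 C hC0 hb a β ha2 ?_ hβ0 hβ2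
  intro γ hγ
  set m := Measure.pi μ
  have h1 := hent γ hγ
  have hintfe : Integrable (fun x => a ^ 2 * (f x * Real.exp (γ * f x))) m := by
    refine Integrable.const_mul ?_ _
    refine int_bdd (hf.mul ((hf.const_mul γ).exp)) (C * Real.exp (|γ| * C)) fun x => ?_
    rw [Real.norm_eq_abs, abs_of_nonneg (mul_nonneg (hf0 x) (Real.exp_pos _).le)]
    refine mul_le_mul (hb x) (Real.exp_le_exp.2 <| le_trans
      (mul_le_mul_of_nonneg_right (le_abs_self γ) (hf0 x))
      (mul_le_mul_of_nonneg_left (hb x) (abs_nonneg γ))) (Real.exp_pos _).le hC0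
  have hmono : (∫ x, (∑ k, (f x - ⨅ y : Ω k, f (Function.update x k y)) ^ 2)
        * Real.exp (γ * f x) ∂m)
      ≤ a ^ 2 * ∫ x, f x * Real.exp (γ * f x) ∂m := by
    rw [← integral_const_mul]
    refine integral_mono_of_nonneg ?_ hintfe ?_
    · refine Filter.Eventually.of_forall fun x => ?_
      have : (0:ℝ) ≤ ∑ k, (f x - ⨅ y : Ω k, f (Function.update x k y)) ^ 2 :=
        Finset.sum_nonneg fun k _ => sq_nonneg _
      positivity
    · refine Filter.Eventually.of_forall fun x => ?_
      have := mul_le_mul_of_nonneg_right (hDf x) (Real.exp_pos (γ * f x)).le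
      simpa [mul_assoc] using this
  have hZpos : 0 < ∫ x, Real.exp (γ * f x) ∂m := by
    refine integral_exp_pos ?_
    refine int_bdd ((hf.const_mul γ).exp) (Real.exp (|γ| * C)) fun x => ?_
    rw [Real.norm_eq_abs, abs_of_pos (Real.exp_pos _)]
    exact Real.exp_le_exp.2 <| le_trans
      (mul_le_mul_of_nonneg_right (le_abs_self γ) (hf0 x))
      (mul_le_mul_of_nonneg_left (hb x) (abs_nonneg γ))
  refine le_trans h1 ?_
  have h3 : γ ^ 2 / 2 * ((∫ x, (∑ k, (f x - ⨅ y : Ω k, f (Function.update x k y)) ^ 2)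
        * Real.exp (γ * f x) ∂m) / ∫ x, Real.exp (γ * f x) ∂m)
      ≤ γ ^ 2 / 2 * ((a ^ 2 * ∫ x, f x * Real.exp (γ * f x) ∂m)
        / ∫ x, Real.exp (γ * f x) ∂m) := by
    gcongr
  refine le_trans h3 (le_of_eq ?_)
  ring
end

section
/- Chatterjee's variance formula: let X = (X₁,...,Xₙ) be a vector of independent random variables, X' an independent copy, X^{(k)} equal to X with X_k replaced by X'_k, and X^{[k]} = (X'₁,...,X'_k,X_{k+1},...,Xₙ). Then for bounded measurable f with E[f(X)] = 0, σ²(f(X)) = (1/2)Σ_{k=1}^n E[(f(X) - f(X^{(k)}))(f(X^{[k-1]}) - f(X^{[k]}))]. -/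
open MeasureTheory Set

namespace Chatterjee14

variable {n : ℕ} {Ω : Fin n → Type*} [∀ k, MeasurableSpace (Ω k)]

/-- Dependent version of `MeasurableEquiv.arrowProdEquivProdArrow`. -/
def prodPi : (∀ i, Ω i × Ω i) ≃ᵐ (∀ i, Ω i) × (∀ i, Ω i) where
  toFun w := (fun i => (w i).1, fun i => (w i).2)
  invFun p i := (p.1 i, p.2 i)
  left_inv w := rfl
  right_inv p := rfl
  measurable_toFun := by
    refine Measurable.prodMk ?_ ?_ <;>
      exact measurable_pi_lambda _ fun i => by
        first
          | exact (measurable_pi_apply i).fst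
          | exact (measurable_pi_apply i).snd
  measurable_invFun := measurable_pi_lambda _ fun i =>
    ((measurable_pi_apply i).comp measurable_fst).prodMk
      ((measurable_pi_apply i).comp measurable_snd)

theorem measurePreserving_prodPi (μ : ∀ k, Measure (Ω k)) [∀ k, SigmaFinite (μ k)] :
    MeasurePreserving (prodPi (Ω := Ω))
      (Measure.pi fun i => (μ i).prod (μ i)) ((Measure.pi μ).prod (Measure.pi μ)) where
  measurable := prodPi.measurable
  map_eq := by
    refine (Measure.FiniteSpanningSetsIn.ext ?_ (isPiSystem_pi.prod isPiSystem_pi)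
      ((Measure.FiniteSpanningSetsIn.pi fun i => (μ i).toFiniteSpanningSetsIn).prod
      (Measure.FiniteSpanningSetsIn.pi (fun i => (μ i).toFiniteSpanningSetsIn))) ?_).symm
    · refine (generateFrom_eq_prod generateFrom_pi generateFrom_pi ?_ ?_).symm
      · exact (Measure.FiniteSpanningSetsIn.pi
          (fun i => (μ i).toFiniteSpanningSetsIn)).isCountablySpanning
      · exact (Measure.FiniteSpanningSetsIn.pi
          (fun i => (μ i).toFiniteSpanningSetsIn)).isCountablySpanning
    · rintro _ ⟨s, ⟨s, _, rfl⟩, ⟨_, ⟨t, _, rfl⟩, rfl⟩⟩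
      rw [MeasurableEquiv.map_apply]
      rw [show (prodPi (Ω := Ω)) ⁻¹' (univ.pi s ×ˢ univ.pi t) =
          (univ.pi fun i => s i ×ˢ t i) by
          ext w
          simp [prodPi, Set.mem_pi, forall_and]]
      simp_rw [Measure.pi_pi, Measure.prod_prod, Measure.pi_pi, Finset.prod_mul_distrib]

/-- Swap the `k`-th coordinates of the two components. -/
def swapAt (k : Fin n) (p : ((∀ i, Ω i) × (∀ i, Ω i))) : ((∀ i, Ω i) × (∀ i, Ω i)) :=
  (Function.update p.1 k (p.2 k), Function.update p.2 k (p.1 k))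

theorem measurePreserving_swapAt (μ : ∀ k, Measure (Ω k)) [∀ k, SigmaFinite (μ k)]
    (k : Fin n) :
    MeasurePreserving (swapAt (Ω := Ω) k)
      ((Measure.pi μ).prod (Measure.pi μ)) ((Measure.pi μ).prod (Measure.pi μ)) := by
  have hS : MeasurePreserving
      (fun (w : ∀ i, Ω i × Ω i) i => if i = k then (w i).swap else w i)
      (Measure.pi fun i => (μ i).prod (μ i)) (Measure.pi fun i => (μ i).prod (μ i)) := by
    refine measurePreserving_pi (fun i => (μ i).prod (μ i)) (fun i => (μ i).prod (μ i))
      (f := fun i (a : Ω i × Ω i) => if i = k then a.swap else a) (fun i => ?_)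
    by_cases h : i = k
    · simp only [h, if_true]
      exact Measure.measurePreserving_swap
    · simp only [h, if_false]
      exact MeasurePreserving.id _
  have heq : (prodPi (Ω := Ω)) ∘ (fun (w : ∀ i, Ω i × Ω i) i => if i = k then (w i).swap else w i)
      ∘ (prodPi (Ω := Ω)).symm = swapAt k := by
    funext p
    have comp1 : (prodPi ((fun (w : ∀ i, Ω i × Ω i) i => if i = k then (w i).swap else w i)
        (prodPi.symm p))) = (⟨(fun i => if i = k then p.2 i else p.1 i),
          (fun i => if i = k then p.1 i else p.2 i)⟩ :
            ((∀ i, Ω i) × (∀ i, Ω i))) := by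
      refine Prod.ext ?_ ?_ <;> · funext i
                                  by_cases h : i = k <;> simp [prodPi, Prod.swap, h]
    refine Prod.ext ?_ ?_
    · show (prodPi ((fun (w : ∀ i, Ω i × Ω i) i => if i = k then (w i).swap else w i)
        (prodPi.symm p))).1 = _
      rw [comp1]
      funext i
      by_cases h : i = k
      · subst h; simp [swapAt]
      · simp [swapAt, h, Function.update_of_ne h]
    · show (prodPi ((fun (w : ∀ i, Ω i × Ω i) i => if i = k then (w i).swap else w i)
        (prodPi.symm p))).2 = _
      rw [comp1]
      funext i
      by_cases h : i = k
      · subst h; simp [swapAt]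
      · simp [swapAt, h, Function.update_of_ne h]
  rw [← heq]
  exact ((measurePreserving_prodPi μ).comp hS).comp
    (MeasurePreserving.symm _ (measurePreserving_prodPi μ))

/-- The hybrid vector: first `m` coordinates from `p.2`, the rest from `p.1`. -/
def Hle (m : ℕ) (p : ((∀ i, Ω i) × (∀ i, Ω i))) : ∀ i, Ω i :=
  fun i => if (i : ℕ) < m then p.2 i else p.1 i

lemma measurable_Hle (m : ℕ) : Measurable (Hle (Ω := Ω) m) := by
  apply measurable_pi_lambda
  intro i
  by_cases h : (i : ℕ) < m
  · simp only [Hle, h, if_true]; exact (measurable_pi_apply i).comp measurable_snd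
  · simp only [Hle, h, if_false]; exact (measurable_pi_apply i).comp measurable_fst

lemma measurable_updFst (k : Fin n) :
    Measurable (fun p : ((∀ i, Ω i) × (∀ i, Ω i)) => Function.update p.1 k (p.2 k)) := by
  apply measurable_pi_lambda
  intro i
  by_cases h : i = k
  · subst h
    simp only [Function.update_self]
    exact (measurable_pi_apply i).comp measurable_snd
  · simp only [Function.update_of_ne h]
    exact (measurable_pi_apply i).comp measurable_fst

lemma Hle_swapAt (k : Fin n) (p : ((∀ i, Ω i) × (∀ i, Ω i))) :
    Hle (k : ℕ) (swapAt k p) = Hle ((k : ℕ) + 1) p := by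
  funext i
  simp only [Hle, swapAt]
  by_cases h1 : (i : ℕ) < (k : ℕ)
  · have hik : i ≠ k := fun e => absurd (e ▸ h1) (lt_irrefl _)
    rw [if_pos h1, if_pos (by omega), Function.update_of_ne hik]
  · by_cases h2 : (i : ℕ) = (k : ℕ)
    · have : i = k := Fin.ext h2
      subst this
      rw [if_neg h1, if_pos (by omega), Function.update_self]
    · rw [if_neg h1, if_neg (by omega), Function.update_of_ne (fun e => h2 (by rw [e]))]

lemma Hle_succ_swapAt (k : Fin n) (p : ((∀ i, Ω i) × (∀ i, Ω i))) :
    Hle ((k : ℕ) + 1) (swapAt k p) = Hle (k : ℕ) p := by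
  funext i
  simp only [Hle, swapAt]
  by_cases h1 : (i : ℕ) < (k : ℕ)
  · have hik : i ≠ k := fun e => absurd (e ▸ h1) (lt_irrefl _)
    rw [if_pos (by omega), if_pos h1, Function.update_of_ne hik]
  · by_cases h2 : (i : ℕ) = (k : ℕ)
    · have : i = k := Fin.ext h2
      subst this
      rw [if_pos (by omega), if_neg h1, Function.update_self]
    · rw [if_neg (by omega), if_neg h1, Function.update_of_ne (fun e => h2 (by rw [e]))]

lemma updFst_swapAt (k : Fin n) (p : ((∀ i, Ω i) × (∀ i, Ω i))) :
    Function.update (swapAt k p).1 k ((swapAt k p).2 k) = p.1 := by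
  show Function.update (Function.update p.1 k (p.2 k)) k (Function.update p.2 k (p.1 k) k) = p.1
  rw [Function.update_self, Function.update_idem, Function.update_eq_self]

/-- `A μ f m = E[f(X) f(X^{[m]})]`. -/
noncomputable def A (μ : ∀ k, Measure (Ω k)) (f : (∀ k, Ω k) → ℝ) (m : ℕ) : ℝ :=
  ∫ p, f p.1 * f (Hle m p) ∂((Measure.pi μ).prod (Measure.pi μ))

section Main

variable (μ : ∀ k, Measure (Ω k)) [∀ k, IsProbabilityMeasure (μ k)]
  (f : (∀ k, Ω k) → ℝ)

lemma intMul (hf : Measurable f) (C : ℝ) (hb : ∀ x, |f x| ≤ C) (φ ψ : ((∀ i, Ω i) × (∀ i, Ω i)) → (∀ i, Ω i)) (hφ : Measurable φ)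
    (hψ : Measurable ψ) :
    Integrable (fun p => f (φ p) * f (ψ p)) ((Measure.pi μ).prod (Measure.pi μ)) := by
  refine ⟨((hf.comp hφ).mul (hf.comp hψ)).aestronglyMeasurable, ?_⟩
  apply HasFiniteIntegral.of_bounded (C := C * C)
  filter_upwards with p
  rw [Real.norm_eq_abs, abs_mul]
  exact mul_le_mul (hb (φ p)) (hb (ψ p)) (abs_nonneg (f (ψ p)))
    (le_trans (abs_nonneg (f (φ p))) (hb (φ p)))

lemma key (hf : Measurable f) (C : ℝ) (hb : ∀ x, |f x| ≤ C) (k : Fin n) :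
    (∫ p, (f p.1 - f (Function.update p.1 k (p.2 k))) *
        (f (Hle (k : ℕ) p) - f (Hle ((k : ℕ) + 1) p))
      ∂((Measure.pi μ).prod (Measure.pi μ)))
      = 2 * (A μ f (k : ℕ) - A μ f ((k : ℕ) + 1)) := by
  have hT := measurePreserving_swapAt μ k
  have hint : ∀ g : ((∀ i, Ω i) × (∀ i, Ω i)) → ℝ, Measurable g →
      ∫ p, g (swapAt k p) ∂((Measure.pi μ).prod (Measure.pi μ))
        = ∫ p, g p ∂((Measure.pi μ).prod (Measure.pi μ)) := by
    intro g hg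
    conv_rhs => rw [← hT.map_eq]
    rw [integral_map hT.measurable.aemeasurable hg.aestronglyMeasurable]
  have i1 := intMul μ f hf C hb _ _ measurable_fst (measurable_Hle (k : ℕ))
  have i2 := intMul μ f hf C hb _ _ measurable_fst (measurable_Hle ((k : ℕ) + 1))
  have i3 := intMul μ f hf C hb _ _ (measurable_updFst k) (measurable_Hle (k : ℕ))
  have i4 := intMul μ f hf C hb _ _ (measurable_updFst k) (measurable_Hle ((k : ℕ) + 1))
  have hD : (∫ p, f (Function.update p.1 k (p.2 k)) * f (Hle ((k : ℕ) + 1) p)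
      ∂((Measure.pi μ).prod (Measure.pi μ))) = A μ f (k : ℕ) := by
    rw [A, ← hint (fun p => f p.1 * f (Hle (k : ℕ) p))
      ((hf.comp measurable_fst).mul (hf.comp (measurable_Hle _)))]
    congr 1
    funext p
    rw [Hle_swapAt]
    rfl
  have hC : (∫ p, f (Function.update p.1 k (p.2 k)) * f (Hle (k : ℕ) p)
      ∂((Measure.pi μ).prod (Measure.pi μ))) = A μ f ((k : ℕ) + 1) := by
    rw [A, ← hint (fun p => f p.1 * f (Hle ((k : ℕ) + 1) p))
      ((hf.comp measurable_fst).mul (hf.comp (measurable_Hle _)))]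
    congr 1
    funext p
    rw [Hle_succ_swapAt]
    rfl
  have expand : ∀ p : ((∀ i, Ω i) × (∀ i, Ω i)),
      (f p.1 - f (Function.update p.1 k (p.2 k))) *
        (f (Hle (k : ℕ) p) - f (Hle ((k : ℕ) + 1) p))
      = (f p.1 * f (Hle (k : ℕ) p) - f p.1 * f (Hle ((k : ℕ) + 1) p))
        - (f (Function.update p.1 k (p.2 k)) * f (Hle (k : ℕ) p)
           - f (Function.update p.1 k (p.2 k)) * f (Hle ((k : ℕ) + 1) p)) := fun p => by ring
  simp only [expand]
  have i12 : Integrable (fun p => f p.1 * f (Hle (k : ℕ) p) - f p.1 * f (Hle ((k : ℕ) + 1) p))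
      ((Measure.pi μ).prod (Measure.pi μ)) := i1.sub i2
  have i34 : Integrable (fun p => f (Function.update p.1 k (p.2 k)) * f (Hle (k : ℕ) p)
        - f (Function.update p.1 k (p.2 k)) * f (Hle ((k : ℕ) + 1) p))
      ((Measure.pi μ).prod (Measure.pi μ)) := i3.sub i4
  rw [integral_sub i12 i34, integral_sub i1 i2, integral_sub i3 i4, hD, hC]
  show A μ f (k : ℕ) - A μ f ((k : ℕ) + 1) - (A μ f ((k : ℕ) + 1) - A μ f (k : ℕ)) = _
  ring

end Main

end Chatterjee14

open Chatterjee14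

theorem stmt_14 {n : ℕ} {Ω : Fin n → Type*} [∀ k, MeasurableSpace (Ω k)]
    (μ : ∀ k, Measure (Ω k)) [∀ k, IsProbabilityMeasure (μ k)]
    (f : (∀ k, Ω k) → ℝ) (hf : Measurable f) (C : ℝ) (hb : ∀ x, |f x| ≤ C)
    (hmean : ∫ x, f x ∂(Measure.pi μ) = 0) :
    ∫ x, f x ^ 2 ∂(Measure.pi μ)
      = (1/2) * ∑ k : Fin n,
          ∫ p, (f p.1 - f (Function.update p.1 k (p.2 k))) *
              (f (fun i => if (i : ℕ) < (k : ℕ) then p.2 i else p.1 i)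
                - f (fun i => if (i : ℕ) ≤ (k : ℕ) then p.2 i else p.1 i))
            ∂((Measure.pi μ).prod (Measure.pi μ)) := by
  have hsum : ∀ k : Fin n,
      (∫ p, (f p.1 - f (Function.update p.1 k (p.2 k))) *
          (f (fun i => if (i : ℕ) < (k : ℕ) then p.2 i else p.1 i)
            - f (fun i => if (i : ℕ) ≤ (k : ℕ) then p.2 i else p.1 i))
        ∂((Measure.pi μ).prod (Measure.pi μ)))
      = 2 * (A μ f (k : ℕ) - A μ f ((k : ℕ) + 1)) := by
    intro k
    have hle : ∀ p : ((∀ i, Ω i) × (∀ i, Ω i)),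
        (fun i : Fin n => if (i : ℕ) ≤ (k : ℕ) then p.2 i else p.1 i)
          = Hle ((k : ℕ) + 1) p := by
      intro p; funext i; simp only [Hle, Nat.lt_succ_iff]
    simp only [hle]
    exact key μ f hf C hb k
  have htel : ∑ k : Fin n, (A μ f (k : ℕ) - A μ f ((k : ℕ) + 1)) = A μ f 0 - A μ f n := by
    rw [Fin.sum_univ_eq_sum_range (fun m => A μ f m - A μ f (m + 1)) n]
    exact Finset.sum_range_sub' (A μ f) n
  have ha0 : A μ f 0 = ∫ x, f x ^ 2 ∂(Measure.pi μ) := by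
    have h1 : ∀ p : ((∀ i, Ω i) × (∀ i, Ω i)),
        f p.1 * f (Hle 0 p) = (fun x => f x ^ 2) p.1 * (fun _ => (1 : ℝ)) p.2 := by
      intro p
      have : Hle (Ω := Ω) 0 p = p.1 := by funext i; simp [Hle]
      rw [this]; ring
    rw [A]
    calc (∫ p, f p.1 * f (Hle 0 p) ∂((Measure.pi μ).prod (Measure.pi μ)))
        = ∫ p, (fun x => f x ^ 2) p.1 * (fun _ => (1 : ℝ)) p.2
            ∂((Measure.pi μ).prod (Measure.pi μ)) := by simp only [h1]
      _ = (∫ x, f x ^ 2 ∂(Measure.pi μ)) * (∫ _, (1 : ℝ) ∂(Measure.pi μ)) :=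
          integral_prod_mul (μ := Measure.pi μ) (ν := Measure.pi μ)
            (fun x => f x ^ 2) (fun _ => (1 : ℝ))
      _ = ∫ x, f x ^ 2 ∂(Measure.pi μ) := by simp
  have han : A μ f n = 0 := by
    have h1 : ∀ p : ((∀ i, Ω i) × (∀ i, Ω i)), f p.1 * f (Hle n p) = f p.1 * f p.2 := by
      intro p
      have : Hle (Ω := Ω) n p = p.2 := by funext i; simp [Hle, i.isLt]
      rw [this]
    rw [A]
    calc (∫ p, f p.1 * f (Hle n p) ∂((Measure.pi μ).prod (Measure.pi μ)))
        = ∫ p, f p.1 * f p.2 ∂((Measure.pi μ).prod (Measure.pi μ)) := by simp only [h1]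
      _ = (∫ x, f x ∂(Measure.pi μ)) * (∫ x, f x ∂(Measure.pi μ)) :=
          integral_prod_mul (μ := Measure.pi μ) (ν := Measure.pi μ) f f
      _ = 0 := by rw [hmean]; ring
  rw [Finset.sum_congr rfl (fun k _ => hsum k), ← Finset.mul_sum, htel, han, ← ha0]
  ring
end

section
/- Let X₁,...,Xₙ be independent random variables and f a bounded measurable function of (X₁,...,Xₙ). Then Σ_{k=1}^n σ²(E[f(X) | X_k]) ≤ σ²(f(X)). -/
open MeasureTheory

section Aux

variable {n : ℕ} {Ω : Fin n → Type*} [∀ k, MeasurableSpace (Ω k)]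

lemma aux_measurable_update (k : Fin n) :
    Measurable (fun p : Ω k × (∀ i, Ω i) => Function.update p.2 k p.1) := by
  apply measurable_pi_lambda
  intro i
  by_cases h : i = k
  · subst h; simpa using measurable_fst
  · simp only [Function.update_of_ne h]; exact (measurable_pi_apply i).comp measurable_snd

lemma aux_map_update (μ : ∀ k, Measure (Ω k)) [∀ k, IsProbabilityMeasure (μ k)] (k : Fin n) :
    MeasurePreserving (fun p : Ω k × (∀ i, Ω i) => Function.update p.2 k p.1)
      ((μ k).prod (Measure.pi μ)) (Measure.pi μ) := by
  refine ⟨aux_measurable_update k, ?_⟩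
  refine (Measure.pi_eq fun s hs => ?_).symm
  rw [Measure.map_apply (aux_measurable_update k) (MeasurableSet.univ_pi hs)]
  have hset : (fun p : Ω k × (∀ i, Ω i) => Function.update p.2 k p.1) ⁻¹' (Set.pi Set.univ s)
      = (s k) ×ˢ (Set.pi Set.univ (Function.update s k Set.univ)) := by
    ext ⟨y, x⟩
    simp only [Set.mem_preimage, Set.mem_pi, Set.mem_univ, forall_true_left, Set.mem_prod]
    constructor
    · intro h
      refine ⟨by simpa using h k, fun i => ?_⟩
      by_cases hik : i = k
      · subst hik; simp
      · simpa [Function.update_of_ne hik] using h i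
    · rintro ⟨h1, h2⟩ i
      by_cases hik : i = k
      · subst hik; simpa using h1
      · simpa [Function.update_of_ne hik] using h2 i
  rw [hset, Measure.prod_prod, Measure.pi_pi]
  have : ∏ i, μ i (Function.update s k Set.univ i)
      = ∏ i ∈ Finset.univ.erase k, μ i (s i) := by
    rw [← Finset.mul_prod_erase Finset.univ _ (Finset.mem_univ k)]
    simp only [Function.update_self, measure_univ, one_mul]
    exact Finset.prod_congr rfl fun i hi => by
      rw [Function.update_of_ne (Finset.ne_of_mem_erase hi)]
  rw [this, ← Finset.mul_prod_erase Finset.univ _ (Finset.mem_univ k)]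

lemma aux_integrable {α : Type*} [MeasurableSpace α] {ν : Measure α} [IsFiniteMeasure ν]
    {g : α → ℝ} (hg : AEStronglyMeasurable g ν) {C : ℝ} (h : ∀ x, |g x| ≤ C) :
    Integrable g ν :=
  ⟨hg, HasFiniteIntegral.of_bounded (C := C) (Filter.Eventually.of_forall fun x => by
    simpa [Real.norm_eq_abs] using h x)⟩

lemma aux_transfer (μ : ∀ k, Measure (Ω k)) [∀ k, IsProbabilityMeasure (μ k)] (k : Fin n)
    (F : (∀ i, Ω i) → ℝ) (hF : Measurable F) (C : ℝ) (hC : ∀ x, |F x| ≤ C) :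
    ∫ x, F x ∂(Measure.pi μ)
      = ∫ y, ∫ x, F (Function.update x k y) ∂(Measure.pi μ) ∂(μ k) := by
  have hmp := aux_map_update μ k
  have h1 : ∫ x, F x ∂(Measure.pi μ)
      = ∫ p : Ω k × (∀ i, Ω i), F (Function.update p.2 k p.1) ∂((μ k).prod (Measure.pi μ)) := by
    conv_lhs => rw [← hmp.map_eq]
    exact integral_map hmp.measurable.aemeasurable
      (by rw [hmp.map_eq]; exact hF.aestronglyMeasurable)
  rw [h1]
  exact integral_prod _ (aux_integrable
    ((hF.comp (aux_measurable_update k)).aestronglyMeasurable) (fun p => hC _))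

lemma aux_abs_integral {α : Type*} [MeasurableSpace α] {ν : Measure α} [IsProbabilityMeasure ν]
    (g : α → ℝ) (C : ℝ) (h : ∀ x, |g x| ≤ C) : |∫ x, g x ∂ν| ≤ C := by
  rw [← Real.norm_eq_abs]
  calc ‖∫ x, g x ∂ν‖ ≤ C * (ν Set.univ).toReal :=
        norm_integral_le_of_norm_le_const (Filter.Eventually.of_forall fun x => by
          rw [Real.norm_eq_abs]; exact h x)
  _ = C := by simp

end Aux

theorem stmt_16 {n : ℕ} {Ω : Fin n → Type*} [∀ k, MeasurableSpace (Ω k)]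
    (μ : ∀ k, Measure (Ω k)) [∀ k, IsProbabilityMeasure (μ k)]
    (f : (∀ k, Ω k) → ℝ) (hf : Measurable f) (C : ℝ) (hb : ∀ x, |f x| ≤ C) :
    ∑ k : Fin n,
        ∫ y, ((∫ x, f (Function.update x k y) ∂(Measure.pi μ))
            - ∫ x, f x ∂(Measure.pi μ)) ^ 2 ∂(μ k)
      ≤ ∫ x, (f x - ∫ y, f y ∂(Measure.pi μ)) ^ 2 ∂(Measure.pi μ) := by
  -- replace C by |C| so that the bound is nonnegative
  set D : ℝ := |C| with hDdef
  have hD : 0 ≤ D := abs_nonneg C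
  have hb' : ∀ x, |f x| ≤ D := fun x => (hb x).trans (le_abs_self C)
  clear hb
  set π : Measure (∀ i, Ω i) := Measure.pi μ with hπdef
  set m : ℝ := ∫ x, f x ∂π with hmdef
  set g : ∀ k : Fin n, Ω k → ℝ :=
    fun k y => (∫ x, f (Function.update x k y) ∂π) - m with hgdef
  -- bounds
  haveI hπprob : IsProbabilityMeasure π := by rw [hπdef]; infer_instance
  have hm : |m| ≤ D := aux_abs_integral f D hb'
  have hG : ∀ k y, |∫ x, f (Function.update x k y) ∂π| ≤ D := fun k y =>
    aux_abs_integral _ D (fun x => hb' _)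
  have hgb : ∀ k y, |g k y| ≤ D + D := fun k y =>
    (abs_sub _ _).trans (add_le_add (hG k y) hm)
  have hD2 : (0:ℝ) ≤ D + D := by linarith
  -- measurability
  have hGmeas : ∀ k, Measurable (fun y => ∫ x, f (Function.update x k y) ∂π) := by
    intro k
    have : StronglyMeasurable fun p : Ω k × (∀ i, Ω i) => f (Function.update p.2 k p.1) :=
      (hf.comp (aux_measurable_update k)).stronglyMeasurable
    exact this.integral_prod_right'.measurable
  have hgm : ∀ k, Measurable (g k) := fun k => (hGmeas k).sub measurable_const
  have hgmk : ∀ k : Fin n, Measurable (fun x : ∀ i, Ω i => g k (x k)) :=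
    fun k => (hgm k).comp (measurable_pi_apply k)
  -- abbreviation for the single-coordinate variances
  set S : Fin n → ℝ := fun k => ∫ y, (g k y) ^ 2 ∂(μ k) with hSdef
  -- (i) each g k has mean zero w.r.t. μ k
  have hGint : ∀ k, ∫ y, (∫ x, f (Function.update x k y) ∂π) ∂(μ k) = m := fun k =>
    (aux_transfer μ k f hf D hb').symm
  have hg0 : ∀ k, ∫ y, g k y ∂(μ k) = 0 := by
    intro k
    have : ∫ y, g k y ∂(μ k)
        = ∫ y, ((∫ x, f (Function.update x k y) ∂π) - m) ∂(μ k) := by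
      simp only [hgdef]
    rw [this, integral_sub (aux_integrable (hGmeas k).aestronglyMeasurable (hG k))
      (integrable_const m), hGint k, integral_const]
    simp
  -- (ii) ∫ g k (x k) ∂π = 0
  have hA : ∀ k : Fin n, ∫ x, g k (x k) ∂π = 0 := by
    intro k
    have ht := aux_transfer μ k (fun x => g k (x k)) (hgmk k) (D + D) (fun x => hgb k _)
    simp only [Function.update_self] at ht
    rw [ht]
    have hc : ∀ y : Ω k, ∫ _x, g k y ∂π = g k y := fun y => by simp [integral_const]
    simp_rw [← hπdef, hc]
    exact hg0 k
  -- (iii) ∫ g k (x k) * f x ∂π = S k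
  have hfg : ∀ k : Fin n, ∫ x, g k (x k) * f x ∂π = S k := by
    intro k
    have ht := aux_transfer μ k (fun x => g k (x k) * f x) ((hgmk k).mul hf)
      ((D + D) * D) (fun x => by
        rw [abs_mul]
        exact mul_le_mul (hgb k _) (hb' x) (abs_nonneg _) hD2)
    simp only [Function.update_self] at ht
    rw [ht]
    have hc : ∀ y : Ω k, ∫ x, g k y * f (Function.update x k y) ∂π
        = g k y * (∫ x, f (Function.update x k y) ∂π) := fun y =>
      integral_const_mul _ _
    simp_rw [← hπdef, hc]
    have hpt : ∀ y : Ω k, g k y * (∫ x, f (Function.update x k y) ∂π)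
        = (g k y) ^ 2 + m * g k y := by
      intro y
      have : (∫ x, f (Function.update x k y) ∂π) = g k y + m := by
        simp only [hgdef]; ring
      rw [this]; ring
    simp_rw [hpt]
    have intg2 : Integrable (fun y => (g k y) ^ 2) (μ k) :=
      aux_integrable ((hgm k).pow_const 2).aestronglyMeasurable
        (C := (D + D) ^ 2) (fun y => by
          rw [abs_pow]
          exact pow_le_pow_left₀ (abs_nonneg _) (hgb k y) 2)
    have intmg : Integrable (fun y => m * g k y) (μ k) :=
      (aux_integrable (hgm k).aestronglyMeasurable (hgb k)).const_mul m
    rw [integral_add intg2 intmg, integral_const_mul, hg0 k, mul_zero, add_zero]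
  -- (iv) orthogonality
  have horth : ∀ j k : Fin n, j ≠ k → ∫ x, g j (x j) * g k (x k) ∂π = 0 := by
    intro j k hne
    have ht := aux_transfer μ k (fun x => g j (x j) * g k (x k))
      ((hgmk j).mul (hgmk k)) ((D + D) * (D + D)) (fun x => by
        rw [abs_mul]
        exact mul_le_mul (hgb j _) (hgb k _) (abs_nonneg _) hD2)
    simp only [Function.update_self, Function.update_of_ne hne] at ht
    rw [ht]
    have hc : ∀ y : Ω k, ∫ x, g j (x j) * g k y ∂π
        = (∫ x, g j (x j) ∂π) * g k y := fun y => integral_mul_const _ _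
    simp_rw [← hπdef, hc, hA j, zero_mul, integral_zero]
  -- (v) diagonal terms
  have hdiag : ∀ k : Fin n, ∫ x, (g k (x k)) ^ 2 ∂π = S k := by
    intro k
    have ht := aux_transfer μ k (fun x => (g k (x k)) ^ 2)
      ((hgmk k).pow_const 2) ((D + D) ^ 2) (fun x => by
        rw [abs_pow]
        exact pow_le_pow_left₀ (abs_nonneg _) (hgb k _) 2)
    simp only [Function.update_self] at ht
    rw [ht]
    have hc : ∀ y : Ω k, ∫ _x, (g k y) ^ 2 ∂π = (g k y) ^ 2 := fun y => by
      simp [integral_const]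
    simp_rw [← hπdef, hc]
    rfl
  -- integrability of the various functions on π
  have intprod : ∀ j k : Fin n, Integrable (fun x => g j (x j) * g k (x k)) π := by
    intro j k
    exact aux_integrable ((hgmk j).mul (hgmk k)).aestronglyMeasurable
      (C := (D + D) * (D + D)) (fun x => by
        rw [abs_mul]
        exact mul_le_mul (hgb j _) (hgb k _) (abs_nonneg _) hD2)
  have intfmg : ∀ k : Fin n, Integrable (fun x => (f x - m) * g k (x k)) π := by
    intro k
    exact aux_integrable ((hf.sub measurable_const).mul (hgmk k)).aestronglyMeasurable
      (C := (D + D) * (D + D)) (fun x => by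
        rw [abs_mul]
        exact mul_le_mul ((abs_sub _ _).trans (add_le_add (hb' x) hm)) (hgb k _)
          (abs_nonneg _) hD2)
  -- the sum function T
  set T : (∀ i, Ω i) → ℝ := fun x => ∑ k, g k (x k) with hTdef
  have hTm : Measurable T := by
    apply Finset.measurable_sum
    intro k _
    exact hgmk k
  -- ∫ (f - m) * T = ∑ S
  have hFT : ∫ x, (f x - m) * T x ∂π = ∑ k, S k := by
    have hpt : ∀ x, (f x - m) * T x = ∑ k, (f x - m) * g k (x k) := by
      intro x
      simp only [hTdef, Finset.mul_sum]
    simp_rw [hpt]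
    rw [integral_finset_sum _ (fun k _ => intfmg k)]
    refine Finset.sum_congr rfl fun k _ => ?_
    have hpt2 : ∀ x, (f x - m) * g k (x k) = g k (x k) * f x - m * g k (x k) := by
      intro x; ring
    simp_rw [hpt2]
    have int1 : Integrable (fun x => g k (x k) * f x) π :=
      aux_integrable ((hgmk k).mul hf).aestronglyMeasurable
        (C := (D + D) * D) (fun x => by
          rw [abs_mul]
          exact mul_le_mul (hgb k _) (hb' x) (abs_nonneg _) hD2)
    have int2 : Integrable (fun x => m * g k (x k)) π :=
      (aux_integrable (hgmk k).aestronglyMeasurable (fun x => hgb k (x k))).const_mul m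
    rw [integral_sub int1 int2, hfg k, integral_const_mul, hA k, mul_zero, sub_zero]
  -- ∫ T ^ 2 = ∑ S
  have hT2 : ∫ x, (T x) ^ 2 ∂π = ∑ k, S k := by
    have hpt : ∀ x, (T x) ^ 2 = ∑ j, ∑ k, g j (x j) * g k (x k) := by
      intro x
      simp only [hTdef, pow_two, Finset.sum_mul_sum]
    simp_rw [hpt]
    rw [integral_finset_sum _ (fun j _ => integrable_finset_sum _ (fun k _ => intprod j k))]
    have : ∀ j : Fin n, ∫ x, ∑ k, g j (x j) * g k (x k) ∂π = S j := by
      intro j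
      rw [integral_finset_sum _ (fun k _ => intprod j k)]
      rw [Finset.sum_eq_single j]
      · simpa [pow_two] using hdiag j
      · intro k _ hkj
        exact horth j k (Ne.symm hkj)
      · intro hj; exact absurd (Finset.mem_univ j) hj
    simp_rw [this]
  -- put everything together
  have intFm2 : Integrable (fun x => (f x - m) ^ 2) π :=
    aux_integrable ((hf.sub measurable_const).pow_const 2).aestronglyMeasurable
      (C := (D + D) ^ 2) (fun x => by
        rw [abs_pow]
        exact pow_le_pow_left₀ (abs_nonneg _)
          ((abs_sub _ _).trans (add_le_add (hb' x) hm)) 2)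
  have intFT : Integrable (fun x => (f x - m) * T x) π := by
    have hpt : ∀ x, (f x - m) * T x = ∑ k, (f x - m) * g k (x k) := by
      intro x; simp only [hTdef, Finset.mul_sum]
    simp_rw [hpt]
    exact integrable_finset_sum _ (fun k _ => intfmg k)
  have intT2 : Integrable (fun x => (T x) ^ 2) π := by
    have hpt : ∀ x, (T x) ^ 2 = ∑ j, ∑ k, g j (x j) * g k (x k) := by
      intro x; simp only [hTdef, pow_two, Finset.sum_mul_sum]
    simp_rw [hpt]
    exact integrable_finset_sum _
      (fun j _ => integrable_finset_sum _ (fun k _ => intprod j k))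
  have key : 0 ≤ ∫ x, ((f x - m) - T x) ^ 2 ∂π :=
    integral_nonneg (fun x => sq_nonneg _)
  have expand : ∫ x, ((f x - m) - T x) ^ 2 ∂π
      = ∫ x, (f x - m) ^ 2 ∂π - 2 * (∑ k, S k) + (∑ k, S k) := by
    have hpt : ∀ x, ((f x - m) - T x) ^ 2
        = (f x - m) ^ 2 - 2 * ((f x - m) * T x) + (T x) ^ 2 := by
      intro x; ring
    simp_rw [hpt]
    have intsub : Integrable (fun x => (f x - m) ^ 2 - 2 * ((f x - m) * T x)) π :=
      intFm2.sub (intFT.const_mul 2)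
    have intmul : Integrable (fun x => 2 * ((f x - m) * T x)) π := intFT.const_mul 2
    rw [integral_add intsub intT2, integral_sub intFm2 intmul, integral_const_mul, hFT, hT2]
  have final : ∑ k, S k ≤ ∫ x, (f x - m) ^ 2 ∂π := by
    rw [expand] at key
    linarith
  have hgoal : ∑ k : Fin n,
      ∫ y, ((∫ x, f (Function.update x k y) ∂π) - m) ^ 2 ∂(μ k)
      ≤ ∫ x, (f x - m) ^ 2 ∂π := by
    refine le_trans (le_of_eq ?_) final
    refine Finset.sum_congr rfl fun k _ => ?_
    simp only [hSdef, hgdef]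
  exact hgoal
end

section
/- Bias in the Efron–Stein inequality: with X independent, X' an independent copy, X^{(k)} replacing coordinate k by X'_k and X^{(k)(i)} replacing both coordinates k and i (k ≠ i), one has E[Σ²(f)] - σ²(f) ≤ (1/4)Σ_{k≠i} E[(f(X) - f(X^{(i)}) - f(X^{(k)}) + f(X^{(k)(i)}))²], where E[Σ²(f)] = (1/2)Σ_k E[(f(X) - f(X^{(k)}))²]. -/
open MeasureTheory

open Finset

set_option linter.unusedSectionVars false

namespace ES17

variable {n : ℕ} {Ω : Fin n → Type*} [∀ k, MeasurableSpace (Ω k)]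

/-- take coordinates in `S` from `y`, the rest from `x`. -/
def cmb (S : Finset (Fin n)) (y x : ∀ k, Ω k) : ∀ k, Ω k := fun k => if k ∈ S then y k else x k

lemma cmb_empty (y x : ∀ k, Ω k) : cmb ∅ y x = x := by
  funext l; simp [cmb]

lemma cmb_univ (y x : ∀ k, Ω k) : cmb univ y x = y := by
  funext l; simp [cmb]

lemma cmb_invol (S : Finset (Fin n)) (x y : ∀ k, Ω k) :
    cmb S (cmb S x y) (cmb S y x) = x := by
  funext l; by_cases h : l ∈ S <;> simp [cmb, h]

lemma cmb_symmdiff (S T : Finset (Fin n)) (x y : ∀ k, Ω k) :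
    cmb T (cmb S x y) (cmb S y x) = cmb (symmDiff S T) y x := by
  funext l
  by_cases hS : l ∈ S <;> by_cases hT : l ∈ T <;>
    simp [cmb, hS, hT, Finset.mem_symmDiff]

lemma cmb_union_assoc (S T : Finset (Fin n)) (x y z : ∀ k, Ω k) :
    cmb (S ∪ T) (cmb T z y) x = cmb T z (cmb S y x) := by
  funext l
  by_cases hS : l ∈ S <;> by_cases hT : l ∈ T <;>
    simp [cmb, hS, hT]

lemma measurable_cmb (S : Finset (Fin n)) :
    Measurable (fun p : (∀ k, Ω k) × (∀ k, Ω k) => cmb S p.1 p.2) := by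
  apply measurable_pi_lambda
  intro k
  by_cases h : k ∈ S
  · simp only [cmb, h, if_true, if_false]; exact (measurable_pi_apply k).comp (measurable_fst)
  · simp only [cmb, h, if_true, if_false]; exact (measurable_pi_apply k).comp (measurable_snd)

lemma measurable_cmb_swap (S : Finset (Fin n)) :
    Measurable (fun p : (∀ k, Ω k) × (∀ k, Ω k) => cmb S p.2 p.1) :=
  (measurable_cmb S).comp measurable_swap

lemma measurable_cmb_left (S : Finset (Fin n)) (x : ∀ k, Ω k) :
    Measurable (fun y => cmb S y x) :=
  (measurable_cmb S).comp (measurable_id.prodMk measurable_const)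

/-- Swapping the coordinates in `S` between the two components, as a measurable equiv. -/
def swapEquiv (S : Finset (Fin n)) : ((∀ k, Ω k) × (∀ k, Ω k)) ≃ᵐ ((∀ k, Ω k) × (∀ k, Ω k)) where
  toFun p := (cmb S p.2 p.1, cmb S p.1 p.2)
  invFun p := (cmb S p.2 p.1, cmb S p.1 p.2)
  left_inv p := by
    ext1
    · exact cmb_invol S p.1 p.2
    · exact cmb_invol S p.2 p.1
  right_inv p := by
    ext1
    · exact cmb_invol S p.1 p.2
    · exact cmb_invol S p.2 p.1
  measurable_toFun := (measurable_cmb_swap S).prodMk (measurable_cmb S)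
  measurable_invFun := (measurable_cmb_swap S).prodMk (measurable_cmb S)

variable (μ : ∀ k, Measure (Ω k)) [∀ k, IsProbabilityMeasure (μ k)]

lemma measurePreserving_swapEquiv (S : Finset (Fin n)) :
    MeasurePreserving (swapEquiv (Ω := Ω) S) ((Measure.pi μ).prod (Measure.pi μ))
      ((Measure.pi μ).prod (Measure.pi μ)) where
  measurable := (swapEquiv S).measurable
  map_eq := by
    refine (Measure.FiniteSpanningSetsIn.ext ?_ (isPiSystem_pi.prod isPiSystem_pi)
      ((Measure.FiniteSpanningSetsIn.pi fun i => (μ i).toFiniteSpanningSetsIn).prod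
        (Measure.FiniteSpanningSetsIn.pi fun i => (μ i).toFiniteSpanningSetsIn)) ?_).symm
    · refine (generateFrom_eq_prod generateFrom_pi generateFrom_pi ?_ ?_).symm
      · exact (Measure.FiniteSpanningSetsIn.pi fun i =>
          (μ i).toFiniteSpanningSetsIn).isCountablySpanning
      · exact (Measure.FiniteSpanningSetsIn.pi fun i =>
          (μ i).toFiniteSpanningSetsIn).isCountablySpanning
    · rintro _ ⟨_, ⟨s, hs, rfl⟩, _, ⟨t, ht, rfl⟩, rfl⟩
      have hsm : ∀ i, MeasurableSet (s i) := fun i => hs i (Set.mem_univ i)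
      have htm : ∀ i, MeasurableSet (t i) := fun i => ht i (Set.mem_univ i)
      rw [Measure.map_apply (swapEquiv S).measurable
        ((MeasurableSet.univ_pi hsm).prod (MeasurableSet.univ_pi htm))]
      have hpre : (swapEquiv (Ω := Ω) S) ⁻¹' ((Set.univ.pi s) ×ˢ (Set.univ.pi t)) =
          (Set.univ.pi fun k => if k ∈ S then t k else s k) ×ˢ
            (Set.univ.pi fun k => if k ∈ S then s k else t k) := by
        ext p
        simp only [swapEquiv, MeasurableEquiv.coe_mk, Equiv.coe_fn_mk, Set.mem_preimage,
          Set.mem_prod, Set.mem_pi, Set.mem_univ, forall_true_left, true_implies, cmb]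
        constructor
        · rintro ⟨h1, h2⟩
          refine ⟨fun k => ?_, fun k => ?_⟩ <;> by_cases hk : k ∈ S
          · have := h2 k; simp only [hk, if_true] at this ⊢; exact this
          · have := h1 k; simp only [hk, if_false] at this ⊢; exact this
          · have := h1 k; simp only [hk, if_true] at this ⊢; exact this
          · have := h2 k; simp only [hk, if_false] at this ⊢; exact this
        · rintro ⟨h1, h2⟩
          refine ⟨fun k => ?_, fun k => ?_⟩ <;> by_cases hk : k ∈ S
          · have := h2 k; simp only [hk, if_true] at this ⊢; exact this
          · have := h1 k; simp only [hk, if_false] at this ⊢; exact this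
          · have := h1 k; simp only [hk, if_true] at this ⊢; exact this
          · have := h2 k; simp only [hk, if_false] at this ⊢; exact this
      rw [hpre, Measure.prod_prod, Measure.prod_prod, Measure.pi_pi, Measure.pi_pi,
        Measure.pi_pi, Measure.pi_pi, ← Finset.prod_mul_distrib, ← Finset.prod_mul_distrib]
      refine Finset.prod_congr rfl fun k _ => ?_
      by_cases hk : k ∈ S <;> simp [hk, mul_comm]

lemma measurePreserving_cmb (S : Finset (Fin n)) :
    MeasurePreserving (fun p : (∀ k, Ω k) × (∀ k, Ω k) => cmb S p.2 p.1)
      ((Measure.pi μ).prod (Measure.pi μ)) (Measure.pi μ) := by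
  have h2 : MeasurePreserving (Prod.fst)
      ((Measure.pi μ).prod (Measure.pi μ)) (Measure.pi μ) :=
    ⟨measurable_fst, by simp [Measure.map_fst_prod]⟩
  exact h2.comp (measurePreserving_swapEquiv μ S)

section Integrals

lemma intOfBdd {α : Type*} [MeasurableSpace α] {P : Measure α} [IsFiniteMeasure P]
    {g : α → ℝ} {D : ℝ} (hg : Measurable g) (hD : ∀ x, |g x| ≤ D) : Integrable g P :=
  ⟨hg.aestronglyMeasurable, HasFiniteIntegral.of_bounded (C := D)
    (ae_of_all _ fun x => by simpa [Real.norm_eq_abs] using hD x)⟩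

lemma bddMul {α : Type*} {a w : α → ℝ} {A W : ℝ} (hA : ∀ x, |a x| ≤ A) (hW : ∀ x, |w x| ≤ W) :
    ∀ x, |a x * w x| ≤ A * W := fun x => by
  rw [abs_mul]
  exact mul_le_mul (hA x) (hW x) (abs_nonneg _) ((abs_nonneg _).trans (hA x))

lemma integral_swap_cmb (S : Finset (Fin n)) (H : ((∀ k, Ω k) × (∀ k, Ω k)) → ℝ) :
    ∫ p, H p ∂((Measure.pi μ).prod (Measure.pi μ))
      = ∫ p, H (cmb S p.2 p.1, cmb S p.1 p.2) ∂((Measure.pi μ).prod (Measure.pi μ)) :=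
  ((measurePreserving_swapEquiv μ S).integral_comp' H).symm

lemma integral_cmb (S : Finset (Fin n)) (h : (∀ k, Ω k) → ℝ) (hm : Measurable h) :
    ∫ x, h x ∂(Measure.pi μ)
      = ∫ p, h (cmb S p.2 p.1) ∂((Measure.pi μ).prod (Measure.pi μ)) := by
  have h0 := integral_map (μ := (Measure.pi μ).prod (Measure.pi μ))
    (measurable_cmb_swap S).aemeasurable (f := h) hm.aestronglyMeasurable
  rw [(measurePreserving_cmb μ S).map_eq] at h0
  exact h0

noncomputable def Pop (S : Finset (Fin n)) (g : (∀ k, Ω k) → ℝ) : (∀ k, Ω k) → ℝ :=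
  fun x => ∫ y, g (cmb S y x) ∂(Measure.pi μ)

lemma measurable_Pop (S : Finset (Fin n)) {g : (∀ k, Ω k) → ℝ} (hg : Measurable g) :
    Measurable (Pop μ S g) := by
  have h : StronglyMeasurable (fun p : (∀ k, Ω k) × (∀ k, Ω k) => g (cmb S p.2 p.1)) :=
    (hg.comp (measurable_cmb_swap S)).stronglyMeasurable
  exact h.integral_prod_right'.measurable

lemma Pop_bdd (S : Finset (Fin n)) {g : (∀ k, Ω k) → ℝ} {D : ℝ} (hD : ∀ x, |g x| ≤ D) :
    ∀ x, |Pop μ S g x| ≤ D := fun x => by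
  have := norm_integral_le_of_norm_le_const (μ := Measure.pi μ)
    (f := fun y => g (cmb S y x)) (C := D)
    (ae_of_all _ fun y => by simpa [Real.norm_eq_abs] using hD _)
  simpa [Pop, Real.norm_eq_abs, measure_univ] using this

lemma Pop_empty (g : (∀ k, Ω k) → ℝ) : Pop μ ∅ g = g := by
  funext x
  simp [Pop, cmb_empty, integral_const, measure_univ]

lemma Pop_univ (g : (∀ k, Ω k) → ℝ) : Pop μ univ g = fun _ => ∫ y, g y ∂(Measure.pi μ) := by
  funext x
  simp [Pop, cmb_univ]

lemma Pop_comp (S T : Finset (Fin n)) {g : (∀ k, Ω k) → ℝ} {D : ℝ}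
    (hg : Measurable g) (hD : ∀ x, |g x| ≤ D) :
    Pop μ S (Pop μ T g) = Pop μ (S ∪ T) g := by
  funext x
  have hF : Integrable (fun p : (∀ k, Ω k) × (∀ k, Ω k) => g (cmb (S ∪ T) (cmb T p.2 p.1) x))
      ((Measure.pi μ).prod (Measure.pi μ)) :=
    intOfBdd (hg.comp ((measurable_cmb_left _ x).comp (measurable_cmb_swap T)))
      (fun p => hD _)
  calc Pop μ S (Pop μ T g) x
      = ∫ y, ∫ z, g (cmb T z (cmb S y x)) ∂(Measure.pi μ) ∂(Measure.pi μ) := rfl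
    _ = ∫ y, ∫ z, g (cmb (S ∪ T) (cmb T z y) x) ∂(Measure.pi μ) ∂(Measure.pi μ) := by
        simp_rw [cmb_union_assoc]
    _ = ∫ p, g (cmb (S ∪ T) (cmb T p.2 p.1) x) ∂((Measure.pi μ).prod (Measure.pi μ)) :=
        (integral_prod _ hF).symm
    _ = Pop μ (S ∪ T) g x :=
        (integral_cmb μ T _ (hg.comp (measurable_cmb_left _ x))).symm

lemma Pop_adj (S : Finset (Fin n)) {g h : (∀ k, Ω k) → ℝ} {Dg Dh : ℝ}
    (hg : Measurable g) (hDg : ∀ x, |g x| ≤ Dg) (hh : Measurable h) (hDh : ∀ x, |h x| ≤ Dh) :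
    ∫ x, Pop μ S g x * h x ∂(Measure.pi μ) = ∫ x, g x * Pop μ S h x ∂(Measure.pi μ) := by
  have hG : Integrable (fun p : (∀ k, Ω k) × (∀ k, Ω k) => g (cmb S p.2 p.1) * h p.1)
      ((Measure.pi μ).prod (Measure.pi μ)) :=
    intOfBdd ((hg.comp (measurable_cmb_swap S)).mul (hh.comp measurable_fst))
      (bddMul (fun p => hDg _) (fun p => hDh _))
  have hG2 : Integrable (fun p : (∀ k, Ω k) × (∀ k, Ω k) => g p.1 * h (cmb S p.2 p.1))
      ((Measure.pi μ).prod (Measure.pi μ)) :=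
    intOfBdd ((hg.comp measurable_fst).mul (hh.comp (measurable_cmb_swap S)))
      (bddMul (fun p => hDg _) (fun p => hDh _))
  have step1 : ∫ p, g (cmb S p.2 p.1) * h p.1 ∂((Measure.pi μ).prod (Measure.pi μ))
      = ∫ x, Pop μ S g x * h x ∂(Measure.pi μ) := by
    rw [integral_prod _ hG]
    simp_rw [integral_mul_const]
    rfl
  have step2 : ∫ p, g (cmb S p.2 p.1) * h p.1 ∂((Measure.pi μ).prod (Measure.pi μ))
      = ∫ p, g p.1 * h (cmb S p.2 p.1) ∂((Measure.pi μ).prod (Measure.pi μ)) := by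
    rw [integral_swap_cmb μ S]
    simp_rw [cmb_invol]
  have step3 : ∫ p, g p.1 * h (cmb S p.2 p.1) ∂((Measure.pi μ).prod (Measure.pi μ))
      = ∫ x, g x * Pop μ S h x ∂(Measure.pi μ) := by
    rw [integral_prod _ hG2]
    simp_rw [integral_const_mul]
    rfl
  rw [← step1, step2, step3]

end Integrals

section Gam

variable (f : (∀ k, Ω k) → ℝ)

noncomputable def gam (S : Finset (Fin n)) : ℝ := ∫ x, f x * Pop μ S f x ∂(Measure.pi μ)

variable {f} {C : ℝ} (hf : Measurable f) (hb : ∀ x, |f x| ≤ C)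

include hf hb

lemma ip2 (A B : Finset (Fin n)) :
    ∫ x, Pop μ A f x * Pop μ B f x ∂(Measure.pi μ) = gam μ f (A ∪ B) := by
  rw [Pop_adj μ A hf hb (measurable_Pop μ B hf) (Pop_bdd μ B hb),
    Pop_comp μ A B hf hb]
  rfl

lemma prodInt (S T : Finset (Fin n)) :
    ∫ p, f (cmb S p.2 p.1) * f (cmb T p.2 p.1) ∂((Measure.pi μ).prod (Measure.pi μ))
      = gam μ f (symmDiff S T) := by
  rw [integral_swap_cmb μ S]
  simp_rw [cmb_invol, cmb_symmdiff]
  have hF : Integrable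
      (fun p : (∀ k, Ω k) × (∀ k, Ω k) => f p.1 * f (cmb (symmDiff S T) p.2 p.1))
      ((Measure.pi μ).prod (Measure.pi μ)) :=
    intOfBdd ((hf.comp measurable_fst).mul (hf.comp (measurable_cmb_swap _)))
      (bddMul (fun p => hb _) (fun p => hb _))
  rw [integral_prod _ hF]
  simp_rw [integral_const_mul]
  rfl

end Gam

section Comb

lemma int_comb4 {α : Type*} [MeasurableSpace α] (P : Measure α) [IsProbabilityMeasure P]
    {a b c d w : α → ℝ} {A W : ℝ}
    (ha : Measurable a) (hA : ∀ x, |a x| ≤ A) (hb : Measurable b) (hB : ∀ x, |b x| ≤ A)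
    (hc : Measurable c) (hC : ∀ x, |c x| ≤ A) (hd : Measurable d) (hD : ∀ x, |d x| ≤ A)
    (hw : Measurable w) (hW : ∀ x, |w x| ≤ W) :
    ∫ x, (a x - b x - c x + d x) * w x ∂P
      = ((∫ x, a x * w x ∂P) - (∫ x, b x * w x ∂P) - (∫ x, c x * w x ∂P))
          + ∫ x, d x * w x ∂P := by
  have iaw : Integrable (fun x => a x * w x) P := intOfBdd (ha.mul hw) (bddMul hA hW)
  have ibw : Integrable (fun x => b x * w x) P := intOfBdd (hb.mul hw) (bddMul hB hW)
  have icw : Integrable (fun x => c x * w x) P := intOfBdd (hc.mul hw) (bddMul hC hW)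
  have idw : Integrable (fun x => d x * w x) P := intOfBdd (hd.mul hw) (bddMul hD hW)
  have : ∀ x, (a x - b x - c x + d x) * w x
      = ((a x * w x - b x * w x) - c x * w x) + d x * w x := fun x => by ring
  simp_rw [this]
  have h2 : Integrable (fun x => a x * w x - b x * w x) P := iaw.sub ibw
  have h1 : Integrable (fun x => a x * w x - b x * w x - c x * w x) P := h2.sub icw
  rw [integral_add h1 idw, integral_sub h2 icw, integral_sub iaw ibw]

end Comb

section Comb2

lemma int_comb4r {α : Type*} [MeasurableSpace α] (P : Measure α) [IsProbabilityMeasure P]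
    {a b c d w : α → ℝ} {A W : ℝ}
    (ha : Measurable a) (hA : ∀ x, |a x| ≤ A) (hb : Measurable b) (hB : ∀ x, |b x| ≤ A)
    (hc : Measurable c) (hC : ∀ x, |c x| ≤ A) (hd : Measurable d) (hD : ∀ x, |d x| ≤ A)
    (hw : Measurable w) (hW : ∀ x, |w x| ≤ W) :
    ∫ x, w x * (a x - b x - c x + d x) ∂P
      = ((∫ x, w x * a x ∂P) - (∫ x, w x * b x ∂P) - (∫ x, w x * c x ∂P))
          + ∫ x, w x * d x ∂P := by
  have iaw : Integrable (fun x => w x * a x) P := intOfBdd (hw.mul ha) (bddMul hW hA)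
  have ibw : Integrable (fun x => w x * b x) P := intOfBdd (hw.mul hb) (bddMul hW hB)
  have icw : Integrable (fun x => w x * c x) P := intOfBdd (hw.mul hc) (bddMul hW hC)
  have idw : Integrable (fun x => w x * d x) P := intOfBdd (hw.mul hd) (bddMul hW hD)
  have h : ∀ x, w x * (a x - b x - c x + d x)
      = ((w x * a x - w x * b x) - w x * c x) + w x * d x := fun x => by ring
  simp_rw [h]
  have h2 : Integrable (fun x => w x * a x - w x * b x) P := iaw.sub ibw
  have h1 : Integrable (fun x => w x * a x - w x * b x - w x * c x) P := h2.sub icw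
  rw [integral_add h1 idw, integral_sub h2 icw, integral_sub iaw ibw]

end Comb2

section UU

variable (f : (∀ k, Ω k) → ℝ)

noncomputable def uu (j k : Fin n) : (∀ k, Ω k) → ℝ :=
  fun x => f x - Pop μ ({j} : Finset (Fin n)) f x - Pop μ ({k} : Finset (Fin n)) f x
    + Pop μ ({j, k} : Finset (Fin n)) f x

variable {f} {C : ℝ}

lemma measurable_uu (hf : Measurable f) (j k : Fin n) : Measurable (uu μ f j k) :=
  ((hf.sub (measurable_Pop μ {j} hf)).sub (measurable_Pop μ {k} hf)).add
    (measurable_Pop μ {j, k} hf)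

lemma uu_bdd (hb : ∀ x, |f x| ≤ C) (j k : Fin n) :
    ∀ x, |uu μ f j k x| ≤ C + C + C + C := fun x => by
  have h1 := hb x
  have h2 := Pop_bdd μ ({j} : Finset (Fin n)) hb x
  have h3 := Pop_bdd μ ({k} : Finset (Fin n)) hb x
  have h4 := Pop_bdd μ ({j, k} : Finset (Fin n)) hb x
  rw [abs_le] at h1 h2 h3 h4 ⊢
  unfold uu
  constructor <;> [skip; skip] <;> [linarith [h1.1, h2.2, h3.2, h4.1]; linarith]

lemma Pop_uu (hf : Measurable f) (hb : ∀ x, |f x| ≤ C) (T : Finset (Fin n)) (j k : Fin n)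
    (x : ∀ k, Ω k) :
    Pop μ T (uu μ f j k) x
      = Pop μ T f x - Pop μ (T ∪ {j}) f x - Pop μ (T ∪ {k}) f x + Pop μ (T ∪ {j, k}) f x := by
  have iA : Integrable (fun y => f (cmb T y x)) (Measure.pi μ) :=
    intOfBdd (hf.comp (measurable_cmb_left T x)) (fun y => hb _)
  have iB : Integrable (fun y => Pop μ ({j} : Finset (Fin n)) f (cmb T y x)) (Measure.pi μ) :=
    intOfBdd ((measurable_Pop μ {j} hf).comp (measurable_cmb_left T x))
      (fun y => Pop_bdd μ {j} hb _)
  have iC : Integrable (fun y => Pop μ ({k} : Finset (Fin n)) f (cmb T y x)) (Measure.pi μ) :=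
    intOfBdd ((measurable_Pop μ {k} hf).comp (measurable_cmb_left T x))
      (fun y => Pop_bdd μ {k} hb _)
  have iD : Integrable (fun y => Pop μ ({j, k} : Finset (Fin n)) f (cmb T y x)) (Measure.pi μ) :=
    intOfBdd ((measurable_Pop μ {j, k} hf).comp (measurable_cmb_left T x))
      (fun y => Pop_bdd μ {j, k} hb _)
  have h2 : Integrable (fun y => f (cmb T y x)
      - Pop μ ({j} : Finset (Fin n)) f (cmb T y x)) (Measure.pi μ) := iA.sub iB
  have h1 : Integrable (fun y => f (cmb T y x) - Pop μ ({j} : Finset (Fin n)) f (cmb T y x)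
      - Pop μ ({k} : Finset (Fin n)) f (cmb T y x)) (Measure.pi μ) := h2.sub iC
  have e0 : Pop μ T (uu μ f j k) x
      = ∫ y, (f (cmb T y x) - Pop μ ({j} : Finset (Fin n)) f (cmb T y x)
          - Pop μ ({k} : Finset (Fin n)) f (cmb T y x)
          + Pop μ ({j, k} : Finset (Fin n)) f (cmb T y x)) ∂(Measure.pi μ) := rfl
  rw [e0, integral_add h1 iD, integral_sub h2 iC, integral_sub iA iB]
  have cj : (∫ y, Pop μ ({j} : Finset (Fin n)) f (cmb T y x) ∂(Measure.pi μ))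
      = Pop μ (T ∪ {j}) f x := congrFun (Pop_comp μ T {j} hf hb) x
  have ck : (∫ y, Pop μ ({k} : Finset (Fin n)) f (cmb T y x) ∂(Measure.pi μ))
      = Pop μ (T ∪ {k}) f x := congrFun (Pop_comp μ T {k} hf hb) x
  have cjk : (∫ y, Pop μ ({j, k} : Finset (Fin n)) f (cmb T y x) ∂(Measure.pi μ))
      = Pop μ (T ∪ {j, k}) f x := congrFun (Pop_comp μ T {j, k} hf hb) x
  rw [cj, ck, cjk]
  rfl

end UU

section IpExpand

variable {f : (∀ k, Ω k) → ℝ} {C : ℝ}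

lemma ip_expand (hf : Measurable f) (hb : ∀ x, |f x| ≤ C) (T : Finset (Fin n)) (j k : Fin n) :
    ∫ x, uu μ f j k x * Pop μ T (uu μ f j k) x ∂(Measure.pi μ)
      = gam μ f T - gam μ f (T ∪ {j}) - gam μ f (T ∪ {k}) + gam μ f (T ∪ {j, k}) := by
  have hmu : Measurable (uu μ f j k) := measurable_uu μ hf j k
  have hbu : ∀ x, |uu μ f j k x| ≤ C + C + C + C := uu_bdd μ hb j k
  have hw : Measurable (Pop μ T (uu μ f j k)) := measurable_Pop μ T hmu
  have hwb : ∀ x, |Pop μ T (uu μ f j k) x| ≤ C + C + C + C := Pop_bdd μ T hbu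
  have hmf0 : Measurable (Pop μ ({j} : Finset (Fin n)) f) := measurable_Pop μ _ hf
  have hmf1 : Measurable (Pop μ ({k} : Finset (Fin n)) f) := measurable_Pop μ _ hf
  have hmf2 : Measurable (Pop μ ({j, k} : Finset (Fin n)) f) := measurable_Pop μ _ hf
  have e1 : ∫ x, uu μ f j k x * Pop μ T (uu μ f j k) x ∂(Measure.pi μ)
      = ((∫ x, f x * Pop μ T (uu μ f j k) x ∂(Measure.pi μ))
          - (∫ x, Pop μ ({j} : Finset (Fin n)) f x * Pop μ T (uu μ f j k) x ∂(Measure.pi μ))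
          - (∫ x, Pop μ ({k} : Finset (Fin n)) f x * Pop μ T (uu μ f j k) x ∂(Measure.pi μ)))
          + ∫ x, Pop μ ({j, k} : Finset (Fin n)) f x * Pop μ T (uu μ f j k) x ∂(Measure.pi μ) :=
    int_comb4 (Measure.pi μ) hf hb hmf0 (Pop_bdd μ _ hb) hmf1 (Pop_bdd μ _ hb)
      hmf2 (Pop_bdd μ _ hb) hw hwb
  -- helper to expand the right factor
  have key : ∀ (v : (∀ k, Ω k) → ℝ), Measurable v → (∀ x, |v x| ≤ C) →
      ∫ x, v x * Pop μ T (uu μ f j k) x ∂(Measure.pi μ)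
        = ((∫ x, v x * Pop μ T f x ∂(Measure.pi μ))
            - (∫ x, v x * Pop μ (T ∪ {j}) f x ∂(Measure.pi μ))
            - (∫ x, v x * Pop μ (T ∪ {k}) f x ∂(Measure.pi μ)))
            + ∫ x, v x * Pop μ (T ∪ {j, k}) f x ∂(Measure.pi μ) := by
    intro v hv hvb
    have : ∫ x, v x * Pop μ T (uu μ f j k) x ∂(Measure.pi μ)
        = ∫ x, v x * (Pop μ T f x - Pop μ (T ∪ {j}) f x - Pop μ (T ∪ {k}) f x
            + Pop μ (T ∪ {j, k}) f x) ∂(Measure.pi μ) := by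
      simp_rw [Pop_uu μ hf hb T j k]
    rw [this]
    exact int_comb4r (Measure.pi μ) (measurable_Pop μ _ hf) (Pop_bdd μ _ hb)
      (measurable_Pop μ _ hf) (Pop_bdd μ _ hb) (measurable_Pop μ _ hf) (Pop_bdd μ _ hb)
      (measurable_Pop μ _ hf) (Pop_bdd μ _ hb) hv hvb
  rw [e1, key f hf hb, key _ hmf0 (Pop_bdd μ _ hb), key _ hmf1 (Pop_bdd μ _ hb),
    key _ hmf2 (Pop_bdd μ _ hb)]
  have g0 : ∀ V : Finset (Fin n), ∫ x, f x * Pop μ V f x ∂(Measure.pi μ) = gam μ f V :=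
    fun V => rfl
  have gA : ∀ A V : Finset (Fin n),
      ∫ x, Pop μ A f x * Pop μ V f x ∂(Measure.pi μ) = gam μ f (A ∪ V) :=
    fun A V => ip2 μ hf hb A V
  rw [g0, g0, g0, g0, gA, gA, gA, gA, gA, gA, gA, gA, gA, gA, gA, gA]
  have ua : ({j} : Finset (Fin n)) ∪ T = T ∪ {j} := by
    ext l; simp [Finset.mem_union]; try tauto
  have ub : ({j} : Finset (Fin n)) ∪ (T ∪ {j}) = T ∪ {j} := by
    ext l; simp [Finset.mem_union]; try tauto
  have uc : ({j} : Finset (Fin n)) ∪ (T ∪ {k}) = T ∪ {j, k} := by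
    ext l; simp [Finset.mem_union, Finset.mem_insert]; try tauto
  have ud : ({j} : Finset (Fin n)) ∪ (T ∪ {j, k}) = T ∪ {j, k} := by
    ext l; simp [Finset.mem_union, Finset.mem_insert]; try tauto
  have ue : ({k} : Finset (Fin n)) ∪ T = T ∪ {k} := by
    ext l; simp [Finset.mem_union]; try tauto
  have uf : ({k} : Finset (Fin n)) ∪ (T ∪ {j}) = T ∪ {j, k} := by
    ext l; simp [Finset.mem_union, Finset.mem_insert]; try tauto
  have ug : ({k} : Finset (Fin n)) ∪ (T ∪ {k}) = T ∪ {k} := by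
    ext l; simp [Finset.mem_union]; try tauto
  have uh : ({k} : Finset (Fin n)) ∪ (T ∪ {j, k}) = T ∪ {j, k} := by
    ext l; simp [Finset.mem_union, Finset.mem_insert]; try tauto
  have ui : ({j, k} : Finset (Fin n)) ∪ T = T ∪ {j, k} := by
    ext l; simp [Finset.mem_union, Finset.mem_insert]; try tauto
  have uj : ({j, k} : Finset (Fin n)) ∪ (T ∪ {j}) = T ∪ {j, k} := by
    ext l; simp [Finset.mem_union, Finset.mem_insert]; try tauto
  have uk : ({j, k} : Finset (Fin n)) ∪ (T ∪ {k}) = T ∪ {j, k} := by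
    ext l; simp [Finset.mem_union, Finset.mem_insert]; try tauto
  have ul : ({j, k} : Finset (Fin n)) ∪ (T ∪ {j, k}) = T ∪ {j, k} := by
    ext l; simp [Finset.mem_union, Finset.mem_insert]; try tauto
  rw [ua, ub, uc, ud, ue, uf, ug, uh, ui, uj, uk, ul]
  ring

lemma F1 (hf : Measurable f) (hb : ∀ x, |f x| ≤ C) (T : Finset (Fin n)) (j k : Fin n) :
    gam μ f T - gam μ f (T ∪ {j}) - gam μ f (T ∪ {k}) + gam μ f (T ∪ {j, k})
      ≤ gam μ f ∅ - gam μ f {j} - gam μ f {k} + gam μ f {j, k} := by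
  have hmu : Measurable (uu μ f j k) := measurable_uu μ hf j k
  have hbu : ∀ x, |uu μ f j k x| ≤ C + C + C + C := uu_bdd μ hb j k
  have hw : Measurable (Pop μ T (uu μ f j k)) := measurable_Pop μ T hmu
  have hwb : ∀ x, |Pop μ T (uu μ f j k) x| ≤ C + C + C + C := Pop_bdd μ T hbu
  have hT := ip_expand μ hf hb T j k
  have h0 := ip_expand μ hf hb ∅ j k
  rw [Pop_empty, Finset.empty_union, Finset.empty_union, Finset.empty_union] at h0
  have hadj : ∫ x, Pop μ T (uu μ f j k) x * Pop μ T (uu μ f j k) x ∂(Measure.pi μ)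
      = ∫ x, uu μ f j k x * Pop μ T (uu μ f j k) x ∂(Measure.pi μ) := by
    rw [Pop_adj μ T hmu hbu hw hwb, Pop_comp μ T T hmu hbu, Finset.union_self]
  have i1 : Integrable (fun x => uu μ f j k x * uu μ f j k x) (Measure.pi μ) :=
    intOfBdd (hmu.mul hmu) (bddMul hbu hbu)
  have i2 : Integrable (fun x => Pop μ T (uu μ f j k) x * Pop μ T (uu μ f j k) x)
      (Measure.pi μ) := intOfBdd (hw.mul hw) (bddMul hwb hwb)
  have i3 : Integrable (fun x => uu μ f j k x * Pop μ T (uu μ f j k) x) (Measure.pi μ) :=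
    intOfBdd (hmu.mul hw) (bddMul hbu hwb)
  have hmono : ∫ x, uu μ f j k x * Pop μ T (uu μ f j k) x ∂(Measure.pi μ)
      ≤ ∫ x, (uu μ f j k x * uu μ f j k x
          + Pop μ T (uu μ f j k) x * Pop μ T (uu μ f j k) x) / 2 ∂(Measure.pi μ) := by
    refine integral_mono i3 ((i1.add i2).div_const 2) fun x => ?_
    have := sq_nonneg (uu μ f j k x - Pop μ T (uu μ f j k) x)
    simp only [Pi.add_apply]
    nlinarith [this]
  have hsplit : ∫ x, (uu μ f j k x * uu μ f j k x
        + Pop μ T (uu μ f j k) x * Pop μ T (uu μ f j k) x) / 2 ∂(Measure.pi μ)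
      = ((∫ x, uu μ f j k x * uu μ f j k x ∂(Measure.pi μ))
          + ∫ x, Pop μ T (uu μ f j k) x * Pop μ T (uu μ f j k) x ∂(Measure.pi μ)) / 2 := by
    rw [integral_div, integral_add i1 i2]
  rw [hsplit] at hmono
  linarith [hT, h0, hadj, hmono]

end IpExpand

section Stmt

variable {f : (∀ k, Ω k) → ℝ} {C : ℝ}

lemma update_eq_cmb (x y : ∀ k, Ω k) (k : Fin n) :
    Function.update x k (y k) = cmb ({k} : Finset (Fin n)) y x := by
  funext l
  rcases eq_or_ne l k with rfl | h
  · simp [cmb]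
  · simp [cmb, Function.update_of_ne h, h]

lemma update2_eq_cmb (x y : ∀ k, Ω k) (i k : Fin n) (hik : i ≠ k) :
    Function.update (Function.update x k (y k)) i (y i)
      = cmb ({i, k} : Finset (Fin n)) y x := by
  funext l
  rcases eq_or_ne l i with rfl | hi
  · simp [cmb]
  · rcases eq_or_ne l k with rfl | hk
    · simp [cmb, Function.update_of_ne hi]
    · simp [cmb, Function.update_of_ne hi, Function.update_of_ne hk, hi, hk]

lemma intProd (hf : Measurable f) (hb : ∀ x, |f x| ≤ C) (S T : Finset (Fin n)) :
    Integrable (fun p : (∀ k, Ω k) × (∀ k, Ω k) => f (cmb S p.2 p.1) * f (cmb T p.2 p.1))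
      ((Measure.pi μ).prod (Measure.pi μ)) :=
  intOfBdd ((hf.comp (measurable_cmb_swap S)).mul (hf.comp (measurable_cmb_swap T)))
    (bddMul (fun p => hb _) (fun p => hb _))

lemma I_expand (hf : Measurable f) (hb : ∀ x, |f x| ≤ C) (k : Fin n) :
    ∫ p, (f p.1 - f (Function.update p.1 k (p.2 k))) ^ 2
        ∂((Measure.pi μ).prod (Measure.pi μ))
      = 2 * gam μ f ∅ - 2 * gam μ f {k} := by
  have hrw : ∀ p : (∀ k, Ω k) × (∀ k, Ω k),
      (f p.1 - f (Function.update p.1 k (p.2 k))) ^ 2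
        = f (cmb ∅ p.2 p.1) * f (cmb ∅ p.2 p.1)
          - 2 * (f (cmb ∅ p.2 p.1) * f (cmb ({k} : Finset (Fin n)) p.2 p.1))
          + f (cmb ({k} : Finset (Fin n)) p.2 p.1) * f (cmb ({k} : Finset (Fin n)) p.2 p.1) :=
    fun p => by rw [update_eq_cmb p.1 p.2 k, cmb_empty]; ring
  simp_rw [hrw]
  have i1 := intProd μ hf hb (∅ : Finset (Fin n)) ∅
  have i2 := intProd μ hf hb (∅ : Finset (Fin n)) {k}
  have i3 := intProd μ hf hb ({k} : Finset (Fin n)) {k}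
  have i2' : Integrable (fun p : (∀ k, Ω k) × (∀ k, Ω k) =>
      2 * (f (cmb ∅ p.2 p.1) * f (cmb ({k} : Finset (Fin n)) p.2 p.1)))
      ((Measure.pi μ).prod (Measure.pi μ)) := i2.const_mul 2
  have ha : Integrable (fun p : (∀ k, Ω k) × (∀ k, Ω k) =>
      f (cmb ∅ p.2 p.1) * f (cmb ∅ p.2 p.1)
        - 2 * (f (cmb ∅ p.2 p.1) * f (cmb ({k} : Finset (Fin n)) p.2 p.1)))
      ((Measure.pi μ).prod (Measure.pi μ)) := i1.sub i2'
  rw [integral_add ha i3, integral_sub i1 i2', integral_const_mul,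
    prodInt μ hf hb ∅ ∅, prodInt μ hf hb ∅ {k}, prodInt μ hf hb {k} {k}]
  have s1 : symmDiff (∅ : Finset (Fin n)) ∅ = ∅ := by simp
  have s2 : symmDiff (∅ : Finset (Fin n)) {k} = {k} := by simp
  have s3 : symmDiff ({k} : Finset (Fin n)) {k} = ∅ := by simp
  rw [s1, s2, s3]
  ring

lemma Var_expand (hf : Measurable f) (hb : ∀ x, |f x| ≤ C) :
    ∫ x, (f x - ∫ y, f y ∂(Measure.pi μ)) ^ 2 ∂(Measure.pi μ)
      = gam μ f ∅ - gam μ f univ := by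
  set m := ∫ y, f y ∂(Measure.pi μ) with hm
  have hint : Integrable f (Measure.pi μ) := intOfBdd hf hb
  have h2 : Integrable (fun x => f x * f x) (Measure.pi μ) := intOfBdd (hf.mul hf) (bddMul hb hb)
  have h3 : Integrable (fun x => 2 * m * f x) (Measure.pi μ) := hint.const_mul _
  have hrw : ∀ x, (f x - m) ^ 2 = f x * f x - 2 * m * f x + m * m := fun x => by ring
  simp_rw [hrw]
  have ha : Integrable (fun x => f x * f x - 2 * m * f x) (Measure.pi μ) := h2.sub h3
  rw [integral_add ha (integrable_const _), integral_sub h2 h3, integral_const_mul,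
    integral_const]
  have hg0 : gam μ f ∅ = ∫ x, f x * f x ∂(Measure.pi μ) := by rw [gam, Pop_empty]
  have hgu : gam μ f univ = m * m := by
    simp only [gam, Pop_univ, ← hm]
    rw [integral_mul_const]
  rw [hg0, hgu]
  simp [measure_univ, ← hm]
  ring

lemma J_expand (hf : Measurable f) (hb : ∀ x, |f x| ≤ C) (i k : Fin n) (hik : i ≠ k) :
    ∫ p, (f p.1 - f (Function.update p.1 i (p.2 i)) - f (Function.update p.1 k (p.2 k))
          + f (Function.update (Function.update p.1 k (p.2 k)) i (p.2 i))) ^ 2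
        ∂((Measure.pi μ).prod (Measure.pi μ))
      = 4 * (gam μ f ∅ - gam μ f {i} - gam μ f {k} + gam μ f {i, k}) := by
  have hrw : ∀ p : (∀ k, Ω k) × (∀ k, Ω k),
      (f p.1 - f (Function.update p.1 i (p.2 i)) - f (Function.update p.1 k (p.2 k))
          + f (Function.update (Function.update p.1 k (p.2 k)) i (p.2 i))) ^ 2
        = (f (cmb ∅ p.2 p.1) - f (cmb ({i} : Finset (Fin n)) p.2 p.1)
            - f (cmb ({k} : Finset (Fin n)) p.2 p.1) + f (cmb ({i, k} : Finset (Fin n)) p.2 p.1))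
          * (f (cmb ∅ p.2 p.1) - f (cmb ({i} : Finset (Fin n)) p.2 p.1)
            - f (cmb ({k} : Finset (Fin n)) p.2 p.1)
            + f (cmb ({i, k} : Finset (Fin n)) p.2 p.1)) := fun p => by
    rw [update2_eq_cmb p.1 p.2 i k hik, update_eq_cmb p.1 p.2 k, update_eq_cmb p.1 p.2 i,
      cmb_empty]
    ring
  simp_rw [hrw]
  have hmS : ∀ S : Finset (Fin n),
      Measurable (fun p : (∀ k, Ω k) × (∀ k, Ω k) => f (cmb S p.2 p.1)) :=
    fun S => hf.comp (measurable_cmb_swap S)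
  have hbS : ∀ (S : Finset (Fin n)) (p : (∀ k, Ω k) × (∀ k, Ω k)),
      |f (cmb S p.2 p.1)| ≤ C := fun S p => hb _
  have hmW : Measurable (fun p : (∀ k, Ω k) × (∀ k, Ω k) =>
      f (cmb ∅ p.2 p.1) - f (cmb ({i} : Finset (Fin n)) p.2 p.1)
        - f (cmb ({k} : Finset (Fin n)) p.2 p.1) + f (cmb ({i, k} : Finset (Fin n)) p.2 p.1)) :=
    (((hmS ∅).sub (hmS {i})).sub (hmS {k})).add (hmS {i, k})
  have hbW : ∀ p : (∀ k, Ω k) × (∀ k, Ω k),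
      |f (cmb ∅ p.2 p.1) - f (cmb ({i} : Finset (Fin n)) p.2 p.1)
        - f (cmb ({k} : Finset (Fin n)) p.2 p.1) + f (cmb ({i, k} : Finset (Fin n)) p.2 p.1)|
        ≤ C + C + C + C := fun p => by
    have h1 := hbS ∅ p; have h2 := hbS {i} p; have h3 := hbS {k} p; have h4 := hbS {i, k} p
    rw [abs_le] at h1 h2 h3 h4 ⊢
    constructor <;> linarith
  have key : ∀ S : Finset (Fin n),
      ∫ p, (f (cmb ∅ p.2 p.1) - f (cmb ({i} : Finset (Fin n)) p.2 p.1)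
          - f (cmb ({k} : Finset (Fin n)) p.2 p.1)
          + f (cmb ({i, k} : Finset (Fin n)) p.2 p.1)) * f (cmb S p.2 p.1)
          ∂((Measure.pi μ).prod (Measure.pi μ))
        = gam μ f (symmDiff ∅ S) - gam μ f (symmDiff ({i} : Finset (Fin n)) S)
          - gam μ f (symmDiff ({k} : Finset (Fin n)) S)
          + gam μ f (symmDiff ({i, k} : Finset (Fin n)) S) := by
    intro S
    rw [int_comb4 ((Measure.pi μ).prod (Measure.pi μ)) (hmS ∅) (hbS ∅) (hmS {i}) (hbS {i})
      (hmS {k}) (hbS {k}) (hmS {i, k}) (hbS {i, k}) (hmS S) (hbS S),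
      prodInt μ hf hb ∅ S, prodInt μ hf hb {i} S, prodInt μ hf hb {k} S,
      prodInt μ hf hb {i, k} S]
  rw [int_comb4r ((Measure.pi μ).prod (Measure.pi μ)) (hmS ∅) (hbS ∅) (hmS {i}) (hbS {i})
    (hmS {k}) (hbS {k}) (hmS {i, k}) (hbS {i, k}) hmW hbW]
  rw [key ∅, key {i}, key {k}, key {i, k}]
  have hik' : k ≠ i := fun h => hik h.symm
  have s00 : symmDiff (∅ : Finset (Fin n)) ∅ = ∅ := by simp
  have si0 : symmDiff ({i} : Finset (Fin n)) ∅ = {i} := by simp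
  have sk0 : symmDiff ({k} : Finset (Fin n)) ∅ = {k} := by simp
  have sik0 : symmDiff ({i, k} : Finset (Fin n)) ∅ = {i, k} := by simp
  have s0i : symmDiff (∅ : Finset (Fin n)) {i} = {i} := by simp
  have s0k : symmDiff (∅ : Finset (Fin n)) {k} = {k} := by simp
  have s0ik : symmDiff (∅ : Finset (Fin n)) {i, k} = {i, k} := by simp
  have sii : symmDiff ({i} : Finset (Fin n)) {i} = ∅ := by simp
  have skk : symmDiff ({k} : Finset (Fin n)) {k} = ∅ := by simp
  have sikik : symmDiff ({i, k} : Finset (Fin n)) {i, k} = ∅ := by simp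
  have sik : symmDiff ({i} : Finset (Fin n)) {k} = {i, k} := by
    ext l
    simp only [Finset.mem_symmDiff, Finset.mem_singleton, Finset.mem_insert,
      Finset.notMem_empty]
    by_cases h1 : l = i <;> by_cases h2 : l = k <;>
      first
        | exact absurd (h1.symm.trans h2) hik
        | simp [h1, h2, hik, hik']
  have ski : symmDiff ({k} : Finset (Fin n)) {i} = {i, k} := by
    ext l
    simp only [Finset.mem_symmDiff, Finset.mem_singleton, Finset.mem_insert,
      Finset.notMem_empty]
    by_cases h1 : l = i <;> by_cases h2 : l = k <;>
      first
        | exact absurd (h1.symm.trans h2) hik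
        | simp [h1, h2, hik, hik']
  have siik : symmDiff ({i} : Finset (Fin n)) {i, k} = {k} := by
    ext l
    simp only [Finset.mem_symmDiff, Finset.mem_singleton, Finset.mem_insert,
      Finset.notMem_empty]
    by_cases h1 : l = i <;> by_cases h2 : l = k <;>
      first
        | exact absurd (h1.symm.trans h2) hik
        | simp [h1, h2, hik, hik']
  have skik : symmDiff ({k} : Finset (Fin n)) {i, k} = {i} := by
    ext l
    simp only [Finset.mem_symmDiff, Finset.mem_singleton, Finset.mem_insert,
      Finset.notMem_empty]
    by_cases h1 : l = i <;> by_cases h2 : l = k <;>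
      first
        | exact absurd (h1.symm.trans h2) hik
        | simp [h1, h2, hik, hik']
  have siki : symmDiff ({i, k} : Finset (Fin n)) {i} = {k} := by
    ext l
    simp only [Finset.mem_symmDiff, Finset.mem_singleton, Finset.mem_insert,
      Finset.notMem_empty]
    by_cases h1 : l = i <;> by_cases h2 : l = k <;>
      first
        | exact absurd (h1.symm.trans h2) hik
        | simp [h1, h2, hik, hik']
  have sikk : symmDiff ({i, k} : Finset (Fin n)) {k} = {i} := by
    ext l
    simp only [Finset.mem_symmDiff, Finset.mem_singleton, Finset.mem_insert,
      Finset.notMem_empty]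
    by_cases h1 : l = i <;> by_cases h2 : l = k <;>
      first
        | exact absurd (h1.symm.trans h2) hik
        | simp [h1, h2, hik, hik']
  rw [s00, si0, sk0, sik0, s0i, s0k, s0ik, sii, skk, sikik, sik, ski, siik, skik, siki, sikk]
  ring

end Stmt

section Main

variable {f : (∀ k, Ω k) → ℝ} {C : ℝ}

def Fm (m : ℕ) : Finset (Fin n) := univ.filter fun l => (l : ℕ) < m

lemma Fm_zero : (Fm 0 : Finset (Fin n)) = ∅ := by
  ext l; simp [Fm]

lemma Fm_top : (Fm n : Finset (Fin n)) = univ := by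
  ext l; simp [Fm, l.isLt]

lemma Fm_succ {m : ℕ} (hm : m < n) :
    (Fm (m + 1) : Finset (Fin n)) = Fm m ∪ {(⟨m, hm⟩ : Fin n)} := by
  ext l
  simp only [Fm, Finset.mem_filter, Finset.mem_univ, true_and, Finset.mem_union,
    Finset.mem_singleton, Fin.ext_iff, Nat.lt_succ_iff_lt_or_eq]

lemma q_nonneg (hf : Measurable f) (hb : ∀ x, |f x| ≤ C) (i k : Fin n) (hik : i ≠ k) :
    0 ≤ gam μ f ∅ - gam μ f {i} - gam μ f {k} + gam μ f {i, k} := by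
  have h := J_expand μ hf hb i k hik
  have h0 : 0 ≤ ∫ p, (f p.1 - f (Function.update p.1 i (p.2 i))
      - f (Function.update p.1 k (p.2 k))
      + f (Function.update (Function.update p.1 k (p.2 k)) i (p.2 i))) ^ 2
      ∂((Measure.pi μ).prod (Measure.pi μ)) :=
    integral_nonneg fun p => sq_nonneg _
  linarith

lemma step_k (hf : Measurable f) (hb : ∀ x, |f x| ≤ C) (k : Fin n) :
    (gam μ f ∅ - gam μ f {k}) - (gam μ f (Fm ((k : ℕ))) - gam μ f (Fm ((k : ℕ) + 1)))
      ≤ ∑ i ∈ univ \ {k}, (gam μ f ∅ - gam μ f {i} - gam μ f {k} + gam μ f {i, k}) := by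
  have hn : 0 < n := k.pos
  have hksucc : (Fm ((k : ℕ) + 1) : Finset (Fin n)) = Fm (k : ℕ) ∪ {k} := by
    rw [Fm_succ k.isLt]
  have key : ∀ m : ℕ, m < (k : ℕ) →
      (gam μ f (Fm m) - gam μ f (Fm m ∪ {k}))
        - (gam μ f (Fm (m + 1)) - gam μ f (Fm (m + 1) ∪ {k}))
      ≤ gam μ f ∅ - gam μ f {(⟨m % n, Nat.mod_lt m hn⟩ : Fin n)} - gam μ f {k}
        + gam μ f {(⟨m % n, Nat.mod_lt m hn⟩ : Fin n), k} := by
    intro m hm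
    have hmn : m < n := hm.trans k.isLt
    have hj : (⟨m, hmn⟩ : Fin n) = (⟨m % n, Nat.mod_lt m hn⟩ : Fin n) :=
      Fin.ext (by simp [Nat.mod_eq_of_lt hmn])
    have h1 : (Fm (m + 1) : Finset (Fin n)) = Fm m ∪ {(⟨m % n, Nat.mod_lt m hn⟩ : Fin n)} := by
      rw [Fm_succ hmn, hj]
    have h2 : (Fm m ∪ {(⟨m % n, Nat.mod_lt m hn⟩ : Fin n)}) ∪ {k}
        = Fm m ∪ {(⟨m % n, Nat.mod_lt m hn⟩ : Fin n), k} := by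
      ext l; simp only [Finset.mem_union, Finset.mem_singleton, Finset.mem_insert]; tauto
    have hF := F1 μ hf hb (Fm m) (⟨m % n, Nat.mod_lt m hn⟩ : Fin n) k
    rw [h1, h2]
    linarith [hF]
  have htel := Finset.sum_range_sub' (fun m => gam μ f (Fm m) - gam μ f (Fm m ∪ {k})) (k : ℕ)
  have hφ0 : gam μ f (Fm 0) - gam μ f (Fm 0 ∪ {k}) = gam μ f ∅ - gam μ f {k} := by
    rw [Fm_zero, Finset.empty_union]
  have hsum_le : ∑ m ∈ Finset.range (k : ℕ),
      ((gam μ f (Fm m) - gam μ f (Fm m ∪ {k}))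
        - (gam μ f (Fm (m + 1)) - gam μ f (Fm (m + 1) ∪ {k})))
      ≤ ∑ m ∈ Finset.range (k : ℕ),
        (gam μ f ∅ - gam μ f {(⟨m % n, Nat.mod_lt m hn⟩ : Fin n)} - gam μ f {k}
          + gam μ f {(⟨m % n, Nat.mod_lt m hn⟩ : Fin n), k}) :=
    Finset.sum_le_sum fun m hm => key m (Finset.mem_range.mp hm)
  have hbij : ∑ m ∈ Finset.range (k : ℕ),
      (gam μ f ∅ - gam μ f {(⟨m % n, Nat.mod_lt m hn⟩ : Fin n)} - gam μ f {k}
        + gam μ f {(⟨m % n, Nat.mod_lt m hn⟩ : Fin n), k})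
      = ∑ i ∈ (Fm (k : ℕ) : Finset (Fin n)),
        (gam μ f ∅ - gam μ f {i} - gam μ f {k} + gam μ f {i, k}) := by
    refine Finset.sum_nbij' (i := fun m => (⟨m % n, Nat.mod_lt m hn⟩ : Fin n))
      (j := fun i => (i : ℕ)) ?_ ?_ ?_ ?_ ?_
    · intro m hm
      have hm' := Finset.mem_range.mp hm
      refine Finset.mem_filter.mpr ⟨Finset.mem_univ _, ?_⟩
      show ((⟨m % n, Nat.mod_lt m hn⟩ : Fin n) : ℕ) < ↑k
      simpa [Nat.mod_eq_of_lt (hm'.trans k.isLt)] using hm'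
    · intro i hi
      simp only [Fm, Finset.mem_filter] at hi
      exact Finset.mem_range.mpr hi.2
    · intro m hm
      have hm' := Finset.mem_range.mp hm
      simp [Nat.mod_eq_of_lt (hm'.trans k.isLt)]
    · intro i hi
      simp only [Fm, Finset.mem_filter] at hi
      exact Fin.ext (by simp [Nat.mod_eq_of_lt (hi.2.trans k.isLt)])
    · intro m hm
      rfl
  have hsub : (Fm (k : ℕ) : Finset (Fin n)) ⊆ univ \ {k} := by
    intro i hi
    simp only [Fm, Finset.mem_filter] at hi
    simp only [Finset.mem_sdiff, Finset.mem_univ, Finset.mem_singleton, true_and]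
    exact fun h => absurd (h ▸ hi.2) (lt_irrefl _)
  have hmono : ∑ i ∈ (Fm (k : ℕ) : Finset (Fin n)),
      (gam μ f ∅ - gam μ f {i} - gam μ f {k} + gam μ f {i, k})
      ≤ ∑ i ∈ univ \ {k}, (gam μ f ∅ - gam μ f {i} - gam μ f {k} + gam μ f {i, k}) := by
    refine Finset.sum_le_sum_of_subset_of_nonneg hsub fun i hi hni => ?_
    have hik : i ≠ k := by
      simp only [Finset.mem_sdiff, Finset.mem_univ, Finset.mem_singleton, true_and] at hi
      exact hi
    exact q_nonneg μ hf hb i k hik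
  calc (gam μ f ∅ - gam μ f {k})
        - (gam μ f (Fm ((k : ℕ))) - gam μ f (Fm ((k : ℕ) + 1)))
      = (gam μ f (Fm 0) - gam μ f (Fm 0 ∪ {k}))
        - (gam μ f (Fm (k : ℕ)) - gam μ f (Fm (k : ℕ) ∪ {k})) := by rw [hφ0, hksucc]
    _ = ∑ m ∈ Finset.range (k : ℕ),
        ((gam μ f (Fm m) - gam μ f (Fm m ∪ {k}))
          - (gam μ f (Fm (m + 1)) - gam μ f (Fm (m + 1) ∪ {k}))) := htel.symm
    _ ≤ ∑ m ∈ Finset.range (k : ℕ),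
        (gam μ f ∅ - gam μ f {(⟨m % n, Nat.mod_lt m hn⟩ : Fin n)} - gam μ f {k}
          + gam μ f {(⟨m % n, Nat.mod_lt m hn⟩ : Fin n), k}) := hsum_le
    _ = ∑ i ∈ (Fm (k : ℕ) : Finset (Fin n)),
        (gam μ f ∅ - gam μ f {i} - gam μ f {k} + gam μ f {i, k}) := hbij
    _ ≤ _ := hmono

end Main

end ES17

theorem stmt_17 {n : ℕ} {Ω : Fin n → Type*} [∀ k, MeasurableSpace (Ω k)]
    (μ : ∀ k, Measure (Ω k)) [∀ k, IsProbabilityMeasure (μ k)]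
    (f : (∀ k, Ω k) → ℝ) (hf : Measurable f) (C : ℝ) (hb : ∀ x, |f x| ≤ C) :
    (1/2) * (∑ k : Fin n,
          ∫ p, (f p.1 - f (Function.update p.1 k (p.2 k))) ^ 2
            ∂((Measure.pi μ).prod (Measure.pi μ)))
        - ∫ x, (f x - ∫ y, f y ∂(Measure.pi μ)) ^ 2 ∂(Measure.pi μ)
      ≤ (1/4) * ∑ k : Fin n, ∑ i ∈ Finset.univ \ {k},
          ∫ p, (f p.1 - f (Function.update p.1 i (p.2 i))
                - f (Function.update p.1 k (p.2 k))
                + f (Function.update (Function.update p.1 k (p.2 k)) i (p.2 i))) ^ 2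
            ∂((Measure.pi μ).prod (Measure.pi μ)) := by
  have hV := ES17.Var_expand μ hf hb
  have hsum1 : (∑ k : Fin n, ∫ p, (f p.1 - f (Function.update p.1 k (p.2 k))) ^ 2
        ∂((Measure.pi μ).prod (Measure.pi μ)))
      = ∑ k : Fin n, (2 * ES17.gam μ f ∅ - 2 * ES17.gam μ f {k}) :=
    Finset.sum_congr rfl fun k _ => ES17.I_expand μ hf hb k
  have hsum2 : (∑ k : Fin n, ∑ i ∈ Finset.univ \ {k},
        ∫ p, (f p.1 - f (Function.update p.1 i (p.2 i))
              - f (Function.update p.1 k (p.2 k))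
              + f (Function.update (Function.update p.1 k (p.2 k)) i (p.2 i))) ^ 2
          ∂((Measure.pi μ).prod (Measure.pi μ)))
      = ∑ k : Fin n, ∑ i ∈ Finset.univ \ {k},
          4 * (ES17.gam μ f ∅ - ES17.gam μ f {i} - ES17.gam μ f {k} + ES17.gam μ f {i, k}) :=
    Finset.sum_congr rfl fun k _ => Finset.sum_congr rfl fun i hi =>
      ES17.J_expand μ hf hb i k
        (fun h => (Finset.mem_sdiff.mp hi).2 (Finset.mem_singleton.mpr h))
  rw [hsum1, hV, hsum2]
  have htel2 : ∑ k : Fin n,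
      (ES17.gam μ f (ES17.Fm (k : ℕ)) - ES17.gam μ f (ES17.Fm ((k : ℕ) + 1)))
      = ES17.gam μ f ∅ - ES17.gam μ f Finset.univ := by
    rw [Fin.sum_univ_eq_sum_range
        (fun m => ES17.gam μ f (ES17.Fm m) - ES17.gam μ f (ES17.Fm (m + 1))) n,
      Finset.sum_range_sub' (fun m => ES17.gam μ f (ES17.Fm m)) n, ES17.Fm_zero, ES17.Fm_top]
  have e2 : (1/2 : ℝ) * (∑ k : Fin n, (2 * ES17.gam μ f ∅ - 2 * ES17.gam μ f {k}))
      = ∑ k : Fin n, (ES17.gam μ f ∅ - ES17.gam μ f {k}) := by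
    rw [Finset.mul_sum]; exact Finset.sum_congr rfl fun k _ => by ring
  have e4 : (1/4 : ℝ) * (∑ k : Fin n, ∑ i ∈ Finset.univ \ {k},
        4 * (ES17.gam μ f ∅ - ES17.gam μ f {i} - ES17.gam μ f {k} + ES17.gam μ f {i, k}))
      = ∑ k : Fin n, ∑ i ∈ Finset.univ \ {k},
          (ES17.gam μ f ∅ - ES17.gam μ f {i} - ES17.gam μ f {k} + ES17.gam μ f {i, k}) := by
    rw [Finset.mul_sum]
    refine Finset.sum_congr rfl fun k _ => ?_
    rw [Finset.mul_sum]
    exact Finset.sum_congr rfl fun i _ => by ring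
  rw [e2, e4]
  have lhs_eq : (∑ k : Fin n, (ES17.gam μ f ∅ - ES17.gam μ f {k}))
        - (ES17.gam μ f ∅ - ES17.gam μ f Finset.univ)
      = ∑ k : Fin n, ((ES17.gam μ f ∅ - ES17.gam μ f {k})
          - (ES17.gam μ f (ES17.Fm (k : ℕ)) - ES17.gam μ f (ES17.Fm ((k : ℕ) + 1)))) := by
    rw [← htel2, ← Finset.sum_sub_distrib]
  rw [lhs_eq]
  exact Finset.sum_le_sum fun k _ => ES17.step_k μ hf hb k
end
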